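/- arXiv:1710.00494 — 4 statements merged into one kernel-verified Lean document; each statement's English description precedes it below -/
import Mathlib

section
/- Let f : P_n → P_N be a map between the cones of real symmetric positive definite matrices that is monotone (A ≤ B in the Loewner order implies f(A) ≤ f(B)) and subhomogeneous of degree r > 0 (f(tA) ≤ t^r · f(A) for all t ≥ 1 and A ∈ P_n). Then f is Lipschitz with constant r for the Thompson metric: d_T(f(A), f(B)) ≤ r · d_T(A, B) for all A, B ∈ P_n. -/
open Matrix BigOperators

noncomputable section

/-- Loewner order: `A ≤ B` iff `B - A` is positive semidefinite. -/
def loewnerLE {m : ℕ} (A B : Matrix (Fin m) (Fin m) ℝ) : Prop := (B - A).PosSemidef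

/-- `M(B/A) = inf {α > 0 : B ≤ α A}` (Loewner order). -/
noncomputable def Mratio {m : ℕ} (A B : Matrix (Fin m) (Fin m) ℝ) : ℝ :=
  sInf {α : ℝ | 0 < α ∧ loewnerLE B (α • A)}

/-- The Thompson metric `d_T(A,B) = max (log M(B/A)) (log M(A/B))`. -/
noncomputable def thompson {m : ℕ} (A B : Matrix (Fin m) (Fin m) ℝ) : ℝ :=
  max (Real.log (Mratio A B)) (Real.log (Mratio B A))

/-- Eigenvalues of a (Hermitian) matrix arranged in decreasing order, counting
multiplicities; junk value `0` if the matrix is not Hermitian. -/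
noncomputable def sortedEigs {m : ℕ} (A : Matrix (Fin m) (Fin m) ℝ) : Fin m → ℝ :=
  if hA : A.IsHermitian then fun i => hA.eigenvalues (Tuple.sort hA.eigenvalues i.rev)
  else fun _ => 0

/-- Functional calculus: apply `f : ℝ → ℝ` to a symmetric matrix via the spectral
decomposition; junk value `0` if the matrix is not Hermitian. -/
noncomputable def matFun {m : ℕ} (f : ℝ → ℝ) (A : Matrix (Fin m) (Fin m) ℝ) :
    Matrix (Fin m) (Fin m) ℝ :=
  if hA : A.IsHermitian then hA.cfc f else 0

/-- Matrix logarithm via the spectral decomposition. -/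
noncomputable def matLog {m : ℕ} (A : Matrix (Fin m) (Fin m) ℝ) : Matrix (Fin m) (Fin m) ℝ :=
  matFun Real.log A

/-- Matrix exponential via the spectral decomposition. -/
noncomputable def matExp {m : ℕ} (A : Matrix (Fin m) (Fin m) ℝ) : Matrix (Fin m) (Fin m) ℝ :=
  matFun Real.exp A

/-- Positive-definite square root. -/
noncomputable def pdSqrt {m : ℕ} (A : Matrix (Fin m) (Fin m) ℝ) : Matrix (Fin m) (Fin m) ℝ :=
  matFun Real.sqrt A

/-- The inverse square root `A^{-1/2}`. -/
noncomputable def pdInvSqrt {m : ℕ} (A : Matrix (Fin m) (Fin m) ℝ) : Matrix (Fin m) (Fin m) ℝ :=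
  matFun (fun x => (Real.sqrt x)⁻¹) A

/-- The real power `A^r` of a positive definite matrix via the spectral decomposition. -/
noncomputable def matPow {m : ℕ} (r : ℝ) (A : Matrix (Fin m) (Fin m) ℝ) :
    Matrix (Fin m) (Fin m) ℝ :=
  matFun (fun x => x ^ r) A

/-- Frobenius norm `(tr X²)^{1/2}` of a real symmetric matrix. -/
noncomputable def frob {m : ℕ} (X : Matrix (Fin m) (Fin m) ℝ) : ℝ :=
  Real.sqrt ((X * X).trace)

/-- Riemannian trace distance `δ(A,B) = ‖log (A^{-1/2} B A^{-1/2})‖_F`. -/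
noncomputable def riemDist {m : ℕ} (A B : Matrix (Fin m) (Fin m) ℝ) : ℝ :=
  frob (matLog (pdInvSqrt A * B * pdInvSqrt A))

/-- The standard symplectic form matrix `J = [[0, I], [-I, 0]]` of size `(n+n) × (n+n)`. -/
noncomputable def Jmat (n : ℕ) : Matrix (Fin (n + n)) (Fin (n + n)) ℝ :=
  Matrix.reindex finSumFinEquiv finSumFinEquiv (Matrix.fromBlocks 0 1 (-1) 0)

/-- The matrix `A^{1/2} Jᵀ A J A^{1/2}`, whose eigenvalues are the squares of the
(extended) symplectic eigenvalues of `A`. -/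
noncomputable def sympProd {n : ℕ} (A : Matrix (Fin (n + n)) (Fin (n + n)) ℝ) :
    Matrix (Fin (n + n)) (Fin (n + n)) ℝ :=
  pdSqrt A * (Jmat n)ᵀ * A * Jmat n * pdSqrt A

/-- The `t`-weighted geometric mean `A #_t B = A^{1/2} (A^{-1/2} B A^{-1/2})^t A^{1/2}`. -/
noncomputable def gmean {m : ℕ} (t : ℝ) (A B : Matrix (Fin m) (Fin m) ℝ) :
    Matrix (Fin m) (Fin m) ℝ :=
  pdSqrt A * matPow t (pdInvSqrt A * B * pdInvSqrt A) * pdSqrt A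

namespace TAux

variable {m : ℕ}

lemma herm_of_transpose {M : Matrix (Fin m) (Fin m) ℝ} (h : Mᵀ = M) : M.IsHermitian := by
  ext i j
  have := congrFun (congrFun h j) i
  simpa [Matrix.conjTranspose_apply, Matrix.transpose_apply] using this.symm

lemma transpose_of_herm {M : Matrix (Fin m) (Fin m) ℝ} (h : M.IsHermitian) : Mᵀ = M := by
  ext i j
  have := congrFun (congrFun h i) j
  simpa [Matrix.conjTranspose_apply, Matrix.transpose_apply] using this

lemma psd_q {M : Matrix (Fin m) (Fin m) ℝ} (h : M.PosSemidef) (x : Fin m → ℝ) :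
    0 ≤ x ⬝ᵥ M *ᵥ x := by
  simpa using h.dotProduct_mulVec_nonneg x

lemma pd_q {M : Matrix (Fin m) (Fin m) ℝ} (h : M.PosDef) {x : Fin m → ℝ} (hx : x ≠ 0) :
    0 < x ⬝ᵥ M *ᵥ x := by
  simpa using h.dotProduct_mulVec_pos hx

/-- symmetry of the bilinear form -/
lemma symm_form {M : Matrix (Fin m) (Fin m) ℝ} (h : M.IsHermitian) (x y : Fin m → ℝ) :
    x ⬝ᵥ M *ᵥ y = y ⬝ᵥ M *ᵥ x := by
  rw [Matrix.dotProduct_mulVec, ← Matrix.mulVec_transpose, transpose_of_herm h,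
    dotProduct_comm]

/-- Cauchy–Schwarz for a PSD form -/
lemma cs {M : Matrix (Fin m) (Fin m) ℝ} (hM : M.PosSemidef) (x y : Fin m → ℝ) :
    (x ⬝ᵥ M *ᵥ y) ^ 2 ≤ (x ⬝ᵥ M *ᵥ x) * (y ⬝ᵥ M *ᵥ y) := by
  have key : ∀ t : ℝ, 0 ≤ (y ⬝ᵥ M *ᵥ y) * (t * t) + (2 * (x ⬝ᵥ M *ᵥ y)) * t
      + x ⬝ᵥ M *ᵥ x := by
    intro t
    have h0 := psd_q hM (x + t • y)
    have e : (x + t • y) ⬝ᵥ M *ᵥ (x + t • y)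
        = (y ⬝ᵥ M *ᵥ y) * (t * t) + (2 * (x ⬝ᵥ M *ᵥ y)) * t + x ⬝ᵥ M *ᵥ x := by
      simp only [Matrix.mulVec_add, Matrix.mulVec_smul, dotProduct_add, add_dotProduct,
        dotProduct_smul, smul_dotProduct, smul_eq_mul, symm_form hM.1 y x]
      ring
    linarith [e ▸ h0]
  have hd := discrim_le_zero key
  rw [discrim] at hd
  nlinarith [hd]

lemma diag_nonneg {M : Matrix (Fin m) (Fin m) ℝ} (hM : M.PosSemidef) (i : Fin m) :
    0 ≤ M i i := by
  have := psd_q hM (Pi.single i 1)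
  simpa [dotProduct_single, single_dotProduct, Matrix.mulVec_single] using this

lemma trace_bound {M : Matrix (Fin m) (Fin m) ℝ} (hM : M.PosSemidef) (x : Fin m → ℝ) :
    x ⬝ᵥ M *ᵥ x ≤ M.trace * (x ⬝ᵥ x) := by
  have habs : ∀ i j, M i j * (x i * x j) ≤ (Real.sqrt (M i i) * |x i|) * (Real.sqrt (M j j) * |x j|) := by
    intro i j
    have hcs : (M i j) ^ 2 ≤ M i i * M j j := by
      have := cs hM (Pi.single i 1) (Pi.single j 1)
      simpa [dotProduct_single, single_dotProduct, Matrix.mulVec_single] using this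
    have h1 : |M i j| ≤ Real.sqrt (M i i) * Real.sqrt (M j j) := by
      rw [← Real.sqrt_mul_self (abs_nonneg (M i j)) ]
      rw [← Real.sqrt_mul (diag_nonneg hM i)]
      exact Real.sqrt_le_sqrt (by nlinarith [sq_abs (M i j), hcs])
    calc M i j * (x i * x j) ≤ |M i j * (x i * x j)| := le_abs_self _
      _ = |M i j| * (|x i| * |x j|) := by rw [abs_mul, abs_mul]
      _ ≤ (Real.sqrt (M i i) * Real.sqrt (M j j)) * (|x i| * |x j|) := by
          have : (0:ℝ) ≤ |x i| * |x j| := by positivity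
          nlinarith [h1, this]
      _ = (Real.sqrt (M i i) * |x i|) * (Real.sqrt (M j j) * |x j|) := by ring
  have e1 : x ⬝ᵥ M *ᵥ x = ∑ i, ∑ j, M i j * (x i * x j) := by
    simp [dotProduct, Matrix.mulVec, Finset.mul_sum]
    congr 1; funext i; congr 1; funext j; ring
  have e2 : x ⬝ᵥ M *ᵥ x ≤ (∑ i, Real.sqrt (M i i) * |x i|) ^ 2 := by
    rw [e1, sq, Finset.sum_mul_sum]
    exact Finset.sum_le_sum fun i _ => Finset.sum_le_sum fun j _ => habs i j
  have e3 : (∑ i, Real.sqrt (M i i) * |x i|) ^ 2 ≤ (∑ i, M i i) * (∑ i, x i * x i) := by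
    have := Finset.sum_mul_sq_le_sq_mul_sq Finset.univ (fun i => Real.sqrt (M i i))
      (fun i => |x i|)
    calc (∑ i, Real.sqrt (M i i) * |x i|) ^ 2
        ≤ (∑ i, Real.sqrt (M i i) ^ 2) * (∑ i, |x i| ^ 2) := this
      _ = (∑ i, M i i) * (∑ i, x i * x i) := by
          congr 1
          · exact Finset.sum_congr rfl fun i _ => Real.sq_sqrt (diag_nonneg hM i)
          · exact Finset.sum_congr rfl fun i _ => by rw [sq_abs, sq]
  have : Matrix.trace M = ∑ i, M i i := by simp [Matrix.trace, Matrix.diag]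
  rw [this, dotProduct]
  exact e2.trans e3


lemma trace_nonneg {M : Matrix (Fin m) (Fin m) ℝ} (hM : M.PosSemidef) : 0 ≤ M.trace := by
  have : Matrix.trace M = ∑ i, M i i := by simp [Matrix.trace, Matrix.diag]
  rw [this]
  exact Finset.sum_nonneg fun i _ => diag_nonneg hM i

lemma inv_lower {A : Matrix (Fin m) (Fin m) ℝ} (hA : A.PosDef) (x : Fin m → ℝ) :
    x ⬝ᵥ x ≤ A⁻¹.trace * (x ⬝ᵥ A *ᵥ x) := by
  have hinv : A⁻¹.PosDef := hA.inv
  have hdet : IsUnit A.det := isUnit_iff_ne_zero.mpr hA.det_pos.ne'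
  have hAinv : A * A⁻¹ = 1 := Matrix.mul_nonsing_inv A hdet
  have key : (x ⬝ᵥ x) ^ 2 ≤ (x ⬝ᵥ A *ᵥ x) * (x ⬝ᵥ A⁻¹ *ᵥ x) := by
    have hcs := cs hA.posSemidef x (A⁻¹ *ᵥ x)
    have e1 : A *ᵥ (A⁻¹ *ᵥ x) = x := by
      rw [Matrix.mulVec_mulVec, hAinv, Matrix.one_mulVec]
    rw [e1, dotProduct_comm (A⁻¹ *ᵥ x) x] at hcs
    exact hcs
  have htr := trace_bound hinv.posSemidef x
  have hxx : 0 ≤ x ⬝ᵥ x := by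
    simpa [dotProduct] using Finset.sum_nonneg fun i (_ : i ∈ Finset.univ) => mul_self_nonneg (x i)
  have hq : 0 ≤ x ⬝ᵥ A *ᵥ x := psd_q hA.posSemidef x
  have htrn : 0 ≤ A⁻¹.trace := trace_nonneg hinv.posSemidef
  rcases eq_or_lt_of_le hxx with h0 | h0
  · nlinarith
  · nlinarith [key, mul_le_mul_of_nonneg_left htr hq]

/-- quadratic form of `α • A - B` -/
lemma q_sub_smul (A B : Matrix (Fin m) (Fin m) ℝ) (α : ℝ) (x : Fin m → ℝ) :
    x ⬝ᵥ (α • A - B) *ᵥ x = α * (x ⬝ᵥ A *ᵥ x) - x ⬝ᵥ B *ᵥ x := by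
  simp [Matrix.sub_mulVec, Matrix.smul_mulVec, dotProduct_sub, dotProduct_smul,
    smul_eq_mul]

lemma lle_of {A B : Matrix (Fin m) (Fin m) ℝ} (hA : A.IsHermitian) (hB : B.IsHermitian)
    {α : ℝ} (h : ∀ x : Fin m → ℝ, x ⬝ᵥ B *ᵥ x ≤ α * (x ⬝ᵥ A *ᵥ x)) :
    loewnerLE B (α • A) := by
  refine PosSemidef.of_dotProduct_mulVec_nonneg (herm_of_transpose ?_) fun x => ?_
  · have : (α • A - B)ᵀ = α • Aᵀ - Bᵀ := by
      rw [Matrix.transpose_sub, Matrix.transpose_smul]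
    rw [this, transpose_of_herm hA, transpose_of_herm hB]
  · have := h x
    rw [show star x = x from by simp, q_sub_smul]
    linarith

lemma lle_q {A B : Matrix (Fin m) (Fin m) ℝ} {α : ℝ} (h : loewnerLE B (α • A)) :
    ∀ x : Fin m → ℝ, x ⬝ᵥ B *ᵥ x ≤ α * (x ⬝ᵥ A *ᵥ x) := by
  intro x
  have := Matrix.PosSemidef.dotProduct_mulVec_nonneg h x
  rw [show star x = x from by simp, q_sub_smul] at this
  linarith

lemma lle_trans {A B C : Matrix (Fin m) (Fin m) ℝ} (h1 : loewnerLE A B) (h2 : loewnerLE B C) :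
    loewnerLE A C := by
  have := h2.add h1
  simpa [loewnerLE, sub_add_sub_cancel] using this

/-- The defining set of `Mratio`. -/
def S (A B : Matrix (Fin m) (Fin m) ℝ) : Set ℝ := {α : ℝ | 0 < α ∧ loewnerLE B (α • A)}

lemma exists_mem_S {A B : Matrix (Fin m) (Fin m) ℝ} (hA : A.PosDef) (hB : B.PosDef) :
    (S A B).Nonempty := by
  refine ⟨A⁻¹.trace * B.trace + 1, ?_, ?_⟩
  · have h1 : 0 ≤ A⁻¹.trace := trace_nonneg hA.inv.posSemidef
    have h2 : 0 ≤ B.trace := trace_nonneg hB.posSemidef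
    nlinarith
  · refine lle_of hA.1 hB.1 fun x => ?_
    have h1 := trace_bound hB.posSemidef x
    have h2 := inv_lower hA x
    have h3 : 0 ≤ B.trace := trace_nonneg hB.posSemidef
    have h4 : 0 ≤ x ⬝ᵥ A *ᵥ x := psd_q hA.posSemidef x
    nlinarith [mul_le_mul_of_nonneg_left h2 h3]

lemma bddBelow_S (A B : Matrix (Fin m) (Fin m) ℝ) : BddBelow (S A B) :=
  ⟨0, fun a ha => ha.1.le⟩

lemma lle_S_of_le {A B : Matrix (Fin m) (Fin m) ℝ} (hA : A.PosDef) (hB : B.PosDef) {α β : ℝ}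
    (hαβ : α ≤ β) (h : loewnerLE B (α • A)) : loewnerLE B (β • A) := by
  refine lle_of hA.1 hB.1 fun x => ?_
  have h1 := lle_q h x
  have h2 : 0 ≤ x ⬝ᵥ A *ᵥ x := psd_q hA.posSemidef x
  nlinarith

/-- `Mratio` bounds above by any element of `S`. -/
lemma Mratio_le {A B : Matrix (Fin m) (Fin m) ℝ} {β : ℝ} (hβ : 0 < β)
    (h : loewnerLE B (β • A)) : Mratio A B ≤ β :=
  csInf_le (bddBelow_S A B) ⟨hβ, h⟩

/-- positivity of `Mratio` when the dimension is positive -/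
lemma Mratio_pos {A B : Matrix (Fin m) (Fin m) ℝ} (hm : 0 < m) (hA : A.PosDef)
    (hB : B.PosDef) : 0 < Mratio A B := by
  set x0 : Fin m → ℝ := Pi.single ⟨0, hm⟩ 1 with hx0
  have hx0ne : x0 ≠ 0 := by
    intro h
    have := congrFun h ⟨0, hm⟩
    simp [hx0] at this
  have hqA : 0 < x0 ⬝ᵥ A *ᵥ x0 := pd_q hA hx0ne
  have hqB : 0 < x0 ⬝ᵥ B *ᵥ x0 := pd_q hB hx0ne
  have hlb : ∀ a ∈ S A B, (x0 ⬝ᵥ B *ᵥ x0) / (x0 ⬝ᵥ A *ᵥ x0) ≤ a := by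
    intro a ha
    have := lle_q ha.2 x0
    rw [div_le_iff₀ hqA]
    linarith
  have := le_csInf (exists_mem_S hA hB) hlb
  have hpos : 0 < (x0 ⬝ᵥ B *ᵥ x0) / (x0 ⬝ᵥ A *ᵥ x0) := div_pos hqB hqA
  exact lt_of_lt_of_le hpos this

/-- The infimum is attained (positive dimension). -/
lemma Mratio_mem {A B : Matrix (Fin m) (Fin m) ℝ} (hm : 0 < m) (hA : A.PosDef)
    (hB : B.PosDef) : loewnerLE B (Mratio A B • A) := by
  refine lle_of hA.1 hB.1 fun x => ?_
  have hqA : 0 ≤ x ⬝ᵥ A *ᵥ x := psd_q hA.posSemidef x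
  rcases eq_or_lt_of_le hqA with h0 | h0
  · obtain ⟨α, hα⟩ := exists_mem_S hA hB
    have := lle_q hα.2 x
    rw [← h0] at this ⊢
    simpa using this
  · have hlb : ∀ a ∈ S A B, (x ⬝ᵥ B *ᵥ x) / (x ⬝ᵥ A *ᵥ x) ≤ a := by
      intro a ha
      have := lle_q ha.2 x
      rw [div_le_iff₀ h0]
      linarith
    have h1 := le_csInf (exists_mem_S hA hB) hlb
    rw [div_le_iff₀ h0] at h1
    calc x ⬝ᵥ B *ᵥ x ≤ (x ⬝ᵥ B *ᵥ x) / (x ⬝ᵥ A *ᵥ x) * (x ⬝ᵥ A *ᵥ x) := by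
          rw [div_mul_cancel₀]; exact h0.ne'
      _ ≤ Mratio A B * (x ⬝ᵥ A *ᵥ x) := by
          have h2 : (x ⬝ᵥ B *ᵥ x) / (x ⬝ᵥ A *ᵥ x) ≤ Mratio A B := by
            exact le_csInf (exists_mem_S hA hB) hlb
          nlinarith

/-- dimension zero facts -/
lemma psd_dim0 (M : Matrix (Fin 0) (Fin 0) ℝ) : M.PosSemidef := by
  constructor
  · ext i j; exact absurd i.2 (by omega)
  · intro x
    simp [dotProduct, Finsupp.sum_fintype]

lemma Mratio_dim0 (A B : Matrix (Fin 0) (Fin 0) ℝ) : Mratio A B = 0 := by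
  have : S A B = Set.Ioi (0:ℝ) := by
    ext a
    simp only [S, Set.mem_setOf_eq, Set.mem_Ioi]
    exact ⟨fun h => h.1, fun h => ⟨h, psd_dim0 _⟩⟩
  rw [Mratio]
  show sInf (S A B) = 0
  rw [this, csInf_Ioi]

/-- nonnegativity of thompson distance -/
lemma thompson_nonneg {A B : Matrix (Fin m) (Fin m) ℝ} (hA : A.PosDef) (hB : B.PosDef) :
    0 ≤ thompson A B := by
  rcases Nat.eq_zero_or_pos m with hm | hm
  · subst hm
    simp [thompson, Mratio_dim0]
  · have h1 := Mratio_pos hm hA hB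
    have h2 := Mratio_pos hm hB hA
    have hm1 := Mratio_mem hm hA hB
    have hm2 := Mratio_mem hm hB hA
    -- A ≤ M2 • B ≤ M2 * M1 • A
    set x0 : Fin m → ℝ := Pi.single ⟨0, hm⟩ 1 with hx0
    have hx0ne : x0 ≠ 0 := by
      intro h
      have := congrFun h ⟨0, hm⟩
      simp [hx0] at this
    have hqA : 0 < x0 ⬝ᵥ A *ᵥ x0 := pd_q hA hx0ne
    have k1 := lle_q hm1 x0
    have k2 := lle_q hm2 x0
    have hge1 : 1 ≤ Mratio A B * Mratio B A := by
      have hqB : 0 < x0 ⬝ᵥ B *ᵥ x0 := pd_q hB hx0ne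
      nlinarith
    have : 0 ≤ Real.log (Mratio A B) + Real.log (Mratio B A) := by
      rw [← Real.log_mul h1.ne' h2.ne']
      exact Real.log_nonneg hge1
    have := this
    unfold thompson
    rcases le_total (Real.log (Mratio A B)) (Real.log (Mratio B A)) with h | h
    · rw [max_eq_right h]; linarith
    · rw [max_eq_left h]; linarith

lemma pd_smul {A : Matrix (Fin m) (Fin m) ℝ} (hA : A.PosDef) {c : ℝ} (hc : 0 < c) :
    (c • A).PosDef := by
  refine PosDef.of_dotProduct_mulVec_pos ?_ ?_
  · apply herm_of_transpose
    rw [Matrix.transpose_smul, transpose_of_herm hA.1]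
  · intro x hx
    have h1 := pd_q hA hx
    rw [show star x = x from by simp, Matrix.smul_mulVec, dotProduct_smul, smul_eq_mul]
    positivity

end TAux

/-- a monotone, degree-`r` subhomogeneous map `f : P_n → P_N` is
`r`-Lipschitz for the Thompson metric. -/
theorem thompson_lipschitz_of_monotone_subhom
    (n N : ℕ) (r : ℝ) (hr : 0 < r)
    (f : {A : Matrix (Fin n) (Fin n) ℝ // A.PosDef} →
         {B : Matrix (Fin N) (Fin N) ℝ // B.PosDef})
    (hmono : ∀ A B, loewnerLE A.1 B.1 → loewnerLE (f A).1 (f B).1)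
    (hsub : ∀ (t : ℝ), 1 ≤ t → ∀ (A) (h : (t • A.1).PosDef),
      loewnerLE (f ⟨t • A.1, h⟩).1 (t ^ r • (f A).1)) :
    ∀ A B, thompson (f A).1 (f B).1 ≤ r * thompson A.1 B.1 := by
  intro A B
  set θ := thompson A.1 B.1 with hθ
  have hθ0 : 0 ≤ θ := TAux.thompson_nonneg A.2 B.2
  set t := Real.exp θ with ht
  have ht1 : 1 ≤ t := by
    rw [ht, show (1:ℝ) = Real.exp 0 from (Real.exp_zero).symm]
    exact Real.exp_le_exp.mpr hθ0
  have htpos : 0 < t := lt_of_lt_of_le one_pos ht1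
  have key : ∀ (X Y : Matrix (Fin n) (Fin n) ℝ), X.PosDef → Y.PosDef →
      Real.log (Mratio X Y) ≤ θ → loewnerLE Y (t • X) := by
    intro X Y hX hY hlog
    rcases Nat.eq_zero_or_pos n with hn | hn
    · subst hn
      exact TAux.psd_dim0 _
    · have hpos := TAux.Mratio_pos hn hX hY
      have hmem := TAux.Mratio_mem hn hX hY
      have hle : Mratio X Y ≤ t := by
        rw [ht]
        calc Mratio X Y = Real.exp (Real.log (Mratio X Y)) := (Real.exp_log hpos).symm
          _ ≤ Real.exp θ := Real.exp_le_exp.mpr hlog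
      exact TAux.lle_S_of_le hX hY hle hmem
  have hBA : loewnerLE B.1 (t • A.1) := key A.1 B.1 A.2 B.2 (le_max_left _ _)
  have hAB : loewnerLE A.1 (t • B.1) := key B.1 A.1 B.2 A.2 (le_max_right _ _)
  have hpdA : (t • A.1).PosDef := TAux.pd_smul A.2 htpos
  have hpdB : (t • B.1).PosDef := TAux.pd_smul B.2 htpos
  have h1 : loewnerLE (f B).1 (t ^ r • (f A).1) :=
    TAux.lle_trans (hmono B ⟨t • A.1, hpdA⟩ hBA) (hsub t ht1 A hpdA)
  have h2 : loewnerLE (f A).1 (t ^ r • (f B).1) :=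
    TAux.lle_trans (hmono A ⟨t • B.1, hpdB⟩ hAB) (hsub t ht1 B hpdB)
  have htr1 : 1 ≤ t ^ r := by
    calc (1:ℝ) = t ^ (0:ℝ) := (Real.rpow_zero t).symm
      _ ≤ t ^ r := Real.rpow_le_rpow_of_exponent_le ht1 hr.le
  have htrpos : 0 < t ^ r := lt_of_lt_of_le one_pos htr1
  have keyN : ∀ (X Y : Matrix (Fin N) (Fin N) ℝ), X.PosDef → Y.PosDef →
      loewnerLE Y (t ^ r • X) → Real.log (Mratio X Y) ≤ Real.log (t ^ r) := by
    intro X Y hX hY h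
    rcases Nat.eq_zero_or_pos N with hn | hn
    · subst hn
      rw [TAux.Mratio_dim0, Real.log_zero]
      exact Real.log_nonneg htr1
    · exact Real.log_le_log (TAux.Mratio_pos hn hX hY) (TAux.Mratio_le htrpos h)
  have e : Real.log (t ^ r) = r * θ := by
    rw [Real.log_rpow htpos, ht, Real.log_exp]
  have hfin := max_le (keyN _ _ (f A).2 (f B).2 h1) (keyN _ _ (f B).2 (f A).2 h2)
  rw [e] at hfin
  exact hfin
end
end

section
/- The eigenvalue map is contractive for the Riemannian trace distance: for all A, B ∈ P_n, (∑_{i=1}^n (log λ_i(A) − log λ_i(B))²)^{1/2} ≤ ‖log(A^{−1/2} B A^{−1/2})‖_F, where λ_1 ≥ ⋯ ≥ λ_n are the eigenvalues in decreasing order. -/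
open Matrix BigOperators

noncomputable section

section Aux
variable {m : ℕ} {A : Matrix (Fin m) (Fin m) ℝ}

lemma matFun_eq (hA : A.IsHermitian) (f : ℝ → ℝ) :
    matFun f A = (Matrix.IsHermitian.eigenvectorUnitary hA : Matrix (Fin m) (Fin m) ℝ) *
      Matrix.diagonal (f ∘ hA.eigenvalues) *
      star (Matrix.IsHermitian.eigenvectorUnitary hA : Matrix (Fin m) (Fin m) ℝ) := by
  simp [matFun, dif_pos hA, Matrix.IsHermitian.cfc, RCLike.ofReal_real_eq_id, Function.comp_def]

lemma UmulstarU (hA : A.IsHermitian) :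
    (Matrix.IsHermitian.eigenvectorUnitary hA : Matrix (Fin m) (Fin m) ℝ) *
      star (Matrix.IsHermitian.eigenvectorUnitary hA : Matrix (Fin m) (Fin m) ℝ) = 1 :=
  Unitary.mul_star_self_of_mem (Matrix.IsHermitian.eigenvectorUnitary hA).2

lemma starUmulU (hA : A.IsHermitian) :
    star (Matrix.IsHermitian.eigenvectorUnitary hA : Matrix (Fin m) (Fin m) ℝ) *
      (Matrix.IsHermitian.eigenvectorUnitary hA : Matrix (Fin m) (Fin m) ℝ) = 1 :=
  Unitary.star_mul_self_of_mem (Matrix.IsHermitian.eigenvectorUnitary hA).2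

lemma conj_dot (U D : Matrix (Fin m) (Fin m) ℝ) (x : Fin m → ℝ) :
    x ⬝ᵥ ((U * D * Uᵀ) *ᵥ x) = (Uᵀ *ᵥ x) ⬝ᵥ (D *ᵥ (Uᵀ *ᵥ x)) := by
  rw [← Matrix.mulVec_mulVec, ← Matrix.mulVec_mulVec, Matrix.dotProduct_mulVec,
    ← Matrix.mulVec_transpose]

lemma matFun_isHermitian (hA : A.IsHermitian) (f : ℝ → ℝ) : (matFun f A).IsHermitian := by
  rw [matFun_eq hA]
  apply Matrix.isHermitian_mul_mul_conjTranspose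
  exact Matrix.isHermitian_diagonal _

lemma conj_same_mul (U D E : Matrix (Fin m) (Fin m) ℝ) (h : star U * U = 1) :
    (U * D * star U) * (U * E * star U) = U * (D * E) * star U := by
  have : (U * D * star U) * (U * E * star U) = U * D * ((star U * U) * (E * star U)) := by
    simp only [Matrix.mul_assoc]
  rw [this, h, Matrix.one_mul]
  simp only [Matrix.mul_assoc]

lemma matFun_mul (hA : A.IsHermitian) (f g : ℝ → ℝ) :
    matFun f A * matFun g A = matFun (fun x => f x * g x) A := by
  rw [matFun_eq hA, matFun_eq hA, matFun_eq hA,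
    conj_same_mul _ _ _ (starUmulU hA), Matrix.diagonal_mul_diagonal]
  rfl

lemma matFun_const (hA : A.IsHermitian) (c : ℝ) :
    matFun (fun _ => c) A = c • (1 : Matrix (Fin m) (Fin m) ℝ) := by
  rw [matFun_eq hA]
  have : Matrix.diagonal ((fun _ => c) ∘ hA.eigenvalues) = c • (1 : Matrix (Fin m) (Fin m) ℝ) := by
    ext i j
    by_cases h : i = j <;> simp [Matrix.diagonal_apply, Matrix.one_apply, h]
  rw [this]
  rw [Matrix.mul_smul, Matrix.smul_mul, mul_one, UmulstarU hA]

lemma matFun_congr (hA : A.IsHermitian) {f g : ℝ → ℝ}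
    (h : ∀ i, f (hA.eigenvalues i) = g (hA.eigenvalues i)) : matFun f A = matFun g A := by
  rw [matFun_eq hA, matFun_eq hA,
    show (f ∘ hA.eigenvalues) = (g ∘ hA.eigenvalues) from funext h]

lemma matFun_sub_posSemidef (hA : A.IsHermitian) {f g : ℝ → ℝ}
    (h : ∀ i, g (hA.eigenvalues i) ≤ f (hA.eigenvalues i)) :
    (matFun f A - matFun g A).PosSemidef := by
  rw [matFun_eq hA, matFun_eq hA]
  set U := (Matrix.IsHermitian.eigenvectorUnitary hA : Matrix (Fin m) (Fin m) ℝ)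
  have : U * Matrix.diagonal (f ∘ hA.eigenvalues) * star U - U * Matrix.diagonal (g ∘ hA.eigenvalues) * star U
      = U * Matrix.diagonal (fun i => f (hA.eigenvalues i) - g (hA.eigenvalues i)) * star U := by
    have : Matrix.diagonal (fun i => f (hA.eigenvalues i) - g (hA.eigenvalues i))
        = Matrix.diagonal (f ∘ hA.eigenvalues) - Matrix.diagonal (g ∘ hA.eigenvalues) := by
      rw [Matrix.diagonal_sub]; rfl
    rw [this, Matrix.mul_sub, Matrix.sub_mul]
  rw [this]
  have hdiag : (Matrix.diagonal (fun i => f (hA.eigenvalues i) - g (hA.eigenvalues i))).PosSemidef :=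
    Matrix.PosSemidef.diagonal (fun i => by simpa using sub_nonneg.mpr (h i))
  have := hdiag.mul_mul_conjTranspose_same U
  simpa [Matrix.star_eq_conjTranspose] using this

lemma matFun_posDef (hA : A.IsHermitian) {f : ℝ → ℝ}
    (h : ∀ i, 0 < f (hA.eigenvalues i)) : (matFun f A).PosDef := by
  rw [matFun_eq hA]
  set U := (Matrix.IsHermitian.eigenvectorUnitary hA : Matrix (Fin m) (Fin m) ℝ)
  have hdiag : (Matrix.diagonal (f ∘ hA.eigenvalues)).PosDef :=
    Matrix.posDef_diagonal_iff.mpr (fun i => h i)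
  rw [Matrix.posDef_iff_dotProduct_mulVec]
  constructor
  · apply Matrix.isHermitian_mul_mul_conjTranspose
    exact Matrix.isHermitian_diagonal _
  · intro x hx
    have hUx : star U *ᵥ x ≠ 0 := by
      intro hc
      apply hx
      have := congrArg (fun v => U *ᵥ v) hc
      have h2 : U * star U = 1 := UmulstarU hA
      simpa [Matrix.mulVec_mulVec, h2] using this
    have := (Matrix.posDef_iff_dotProduct_mulVec.mp hdiag).2 hUx
    convert this using 1
    have hsU : star U = Uᵀ := by
      rw [Matrix.star_eq_conjTranspose, Matrix.conjTranspose_eq_transpose_of_trivial]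
    rw [hsU]
    simp only [star_trivial]
    rw [conj_dot]

lemma matFun_spectral (hA : A.IsHermitian) : matFun id A = A := by
  rw [matFun_eq hA]
  have := hA.spectral_theorem
  simpa [RCLike.ofReal_real_eq_id, Function.comp_def] using this.symm

lemma trace_matFun (hA : A.IsHermitian) (f : ℝ → ℝ) :
    (matFun f A).trace = ∑ i, f (hA.eigenvalues i) := by
  rw [matFun_eq hA, Matrix.trace_mul_cycle, starUmulU hA, Matrix.one_mul, Matrix.trace_diagonal]
  rfl

lemma det_matFun (hA : A.IsHermitian) (f : ℝ → ℝ) :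
    (matFun f A).det = ∏ i, f (hA.eigenvalues i) := by
  rw [matFun_eq hA, Matrix.det_mul, Matrix.det_mul]
  rw [mul_comm, ← mul_assoc, ← Matrix.det_mul, starUmulU hA]
  simp [Matrix.det_diagonal]

lemma sortedEigs_eq (hA : A.IsHermitian) :
    sortedEigs A = fun i => hA.eigenvalues (Tuple.sort hA.eigenvalues i.rev) := dif_pos hA

lemma sortedEigs_antitone (hA : A.IsHermitian) : Antitone (sortedEigs A) := by
  rw [sortedEigs_eq hA]
  intro i j hij
  exact Tuple.monotone_sort hA.eigenvalues (Fin.rev_le_rev.mpr hij)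

lemma sum_sortedEigs (hA : A.IsHermitian) (F : ℝ → ℝ) :
    ∑ i, F (sortedEigs A i) = ∑ i, F (hA.eigenvalues i) := by
  rw [sortedEigs_eq hA]
  exact Equiv.sum_comp ((Fin.revPerm).trans (Tuple.sort hA.eigenvalues))
    (fun i => F (hA.eigenvalues i))

lemma prod_sortedEigs (hA : A.IsHermitian) (F : ℝ → ℝ) :
    ∏ i, F (sortedEigs A i) = ∏ i, F (hA.eigenvalues i) := by
  rw [sortedEigs_eq hA]
  exact Equiv.prod_comp ((Fin.revPerm).trans (Tuple.sort hA.eigenvalues))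
    (fun i => F (hA.eigenvalues i))

lemma sortedEigs_pos (hA : A.PosDef) (i : Fin m) : 0 < sortedEigs A i := by
  rw [sortedEigs_eq hA.1]
  exact hA.eigenvalues_pos _

lemma det_eq_prod_sortedEigs (hA : A.IsHermitian) : A.det = ∏ i, sortedEigs A i := by
  have h1 := prod_sortedEigs hA id
  simp only [id] at h1
  have h2 : A.det = ∏ i, hA.eigenvalues i := by
    simpa using hA.det_eq_prod_eigenvalues
  rw [h2, ← h1]

section PD

lemma pdSqrt_posDef (hA : A.PosDef) : (pdSqrt A).PosDef :=
  matFun_posDef hA.1 (fun i => Real.sqrt_pos.mpr (hA.eigenvalues_pos i))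

lemma pdInvSqrt_posDef (hA : A.PosDef) : (pdInvSqrt A).PosDef :=
  matFun_posDef hA.1 (fun i => inv_pos.mpr (Real.sqrt_pos.mpr (hA.eigenvalues_pos i)))

lemma pdSqrt_mul_pdInvSqrt (hA : A.PosDef) : pdSqrt A * pdInvSqrt A = 1 := by
  rw [pdSqrt, pdInvSqrt, matFun_mul hA.1]
  rw [matFun_congr hA.1 (g := fun _ => 1) (fun i => by
    have := hA.eigenvalues_pos i
    field_simp)]
  rw [matFun_const hA.1, one_smul]

lemma pdInvSqrt_mul_pdSqrt (hA : A.PosDef) : pdInvSqrt A * pdSqrt A = 1 := by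
  rw [pdSqrt, pdInvSqrt, matFun_mul hA.1]
  rw [matFun_congr hA.1 (g := fun _ => 1) (fun i => by
    have := hA.eigenvalues_pos i
    field_simp)]
  rw [matFun_const hA.1, one_smul]

lemma pdSqrt_mul_self (hA : A.PosDef) : pdSqrt A * pdSqrt A = A := by
  rw [pdSqrt, matFun_mul hA.1]
  rw [matFun_congr hA.1 (g := id) (fun i => by
    have := hA.eigenvalues_pos i
    simp [Real.mul_self_sqrt this.le])]
  exact matFun_spectral hA.1

lemma pdSqrt_isHermitian (hA : A.PosDef) : (pdSqrt A).IsHermitian := (pdSqrt_posDef hA).1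

lemma pdInvSqrt_isHermitian (hA : A.PosDef) : (pdInvSqrt A).IsHermitian := (pdInvSqrt_posDef hA).1

end PD


lemma spectral_real {A : Matrix (Fin m) (Fin m) ℝ} (hA : A.IsHermitian) :
    A = (Matrix.IsHermitian.eigenvectorUnitary hA : Matrix (Fin m) (Fin m) ℝ) *
      Matrix.diagonal hA.eigenvalues *
      ((Matrix.IsHermitian.eigenvectorUnitary hA : Matrix (Fin m) (Fin m) ℝ))ᵀ := by
  have := hA.spectral_theorem
  rw [Unitary.conjStarAlgAut_apply, Matrix.star_eq_conjTranspose, Matrix.conjTranspose_eq_transpose_of_trivial] at this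
  simpa [RCLike.ofReal_real_eq_id, Function.comp_def] using this

lemma weyl_mono {A B : Matrix (Fin m) (Fin m) ℝ} (hA : A.IsHermitian) (hB : B.IsHermitian)
    {c : ℝ} (hc : 0 ≤ c) (h : (B - c • A).PosSemidef) (j : Fin m) :
    c * sortedEigs A j ≤ sortedEigs B j := by
  classical
  rw [sortedEigs_eq hA, sortedEigs_eq hB]
  set t : Fin m := j.rev with ht
  set lam := hA.eigenvalues with hlam
  set nu := hB.eigenvalues with hnu
  set σA := Tuple.sort lam with hσA
  set σB := Tuple.sort nu with hσB
  set α := lam (σA t) with hα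
  set β := nu (σB t) with hβ
  show c * α ≤ β
  set U := ((Matrix.IsHermitian.eigenvectorUnitary hA : Matrix (Fin m) (Fin m) ℝ)) with hU
  set V := ((Matrix.IsHermitian.eigenvectorUnitary hB : Matrix (Fin m) (Fin m) ℝ)) with hV
  have hUunit : star U * U = 1 := Unitary.star_mul_self_of_mem (Matrix.IsHermitian.eigenvectorUnitary hA).2
  have hVunit : V * star V = 1 := Unitary.mul_star_self_of_mem (Matrix.IsHermitian.eigenvectorUnitary hB).2
  have hstarU : star U = Uᵀ := by
    rw [Matrix.star_eq_conjTranspose, Matrix.conjTranspose_eq_transpose_of_trivial]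
  have hstarV : star V = Vᵀ := by
    rw [Matrix.star_eq_conjTranspose, Matrix.conjTranspose_eq_transpose_of_trivial]
  have hUtU : Uᵀ * U = 1 := by rw [← hstarU]; exact hUunit
  have hVVt : V * Vᵀ = 1 := by rw [← hstarV]; exact hVunit
  set W := Vᵀ * U with hW
  have hWtW : Wᵀ * W = 1 := by
    rw [hW, Matrix.transpose_mul, Matrix.transpose_transpose]
    calc Uᵀ * V * (Vᵀ * U) = Uᵀ * (V * Vᵀ) * U := by simp only [Matrix.mul_assoc]
      _ = 1 := by rw [hVVt, Matrix.mul_one, hUtU]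
  set IA : Finset (Fin m) := (Finset.Ici t).image σA with hIA
  set IB : Finset (Fin m) := (Finset.Iic t).image σB with hIB
  have hcardIA : IA.card = m - t.val := by
    rw [hIA, Finset.card_image_of_injective _ σA.injective, Fin.card_Ici]
  have hcardIB : IB.card = t.val + 1 := by
    rw [hIB, Finset.card_image_of_injective _ σB.injective, Fin.card_Iic]
  -- the kernel vector
  have hcard : Fintype.card ↥(IBᶜ) < Fintype.card ↥IA := by
    rw [Fintype.card_coe, Fintype.card_coe, Finset.card_compl, Fintype.card_fin,
      hcardIA, hcardIB]
    have := t.isLt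
    omega
  set Φ : (↥IA → ℝ) →ₗ[ℝ] (↥(IBᶜ) → ℝ) :=
    { toFun := fun f r => ∑ s : ↥IA, W r.1 s.1 * f s
      map_add' := by
        intro f g; funext r
        simp [mul_add, Finset.sum_add_distrib]
      map_smul' := by
        intro a f; funext r
        simp [Finset.mul_sum]
        ring_nf
        simp [mul_comm, mul_left_comm] } with hΦ
  have hnotinj : ¬ Function.Injective Φ := by
    intro hinj
    have := LinearMap.finrank_le_finrank_of_injective hinj
    rw [Module.finrank_pi, Module.finrank_pi] at this
    omega
  obtain ⟨f, hfker, hfne⟩ : ∃ f, Φ f = 0 ∧ f ≠ 0 := by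
    rw [← LinearMap.ker_eq_bot] at hnotinj
    obtain ⟨f, hf, hne⟩ := Submodule.exists_mem_ne_zero_of_ne_bot hnotinj
    exact ⟨f, hf, hne⟩
  set y : Fin m → ℝ := fun i => if h : i ∈ IA then f ⟨i, h⟩ else 0 with hy
  have hysupp : ∀ i ∉ IA, y i = 0 := fun i hi => dif_neg hi
  have hyf : ∀ s : ↥IA, y s.1 = f s := fun s => by
    show (if h : s.1 ∈ IA then f ⟨s.1, h⟩ else 0) = f s
    rw [dif_pos s.2]
  have hyne : ∃ i, y i ≠ 0 := by
    by_contra hcon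
    push_neg at hcon
    apply hfne
    funext s
    rw [← hyf s, hcon s.1]
    rfl
  set z : Fin m → ℝ := W *ᵥ y with hz
  have hzsupp : ∀ r ∉ IB, z r = 0 := by
    intro r hr
    have : z r = ∑ s : ↥IA, W r s.1 * f s := by
      rw [hz, Matrix.mulVec]
      show ∑ i, W r i * y i = _
      rw [← Finset.sum_subset (Finset.subset_univ IA)
        (fun i _ hi => by rw [hysupp i hi, mul_zero])]
      rw [← Finset.sum_attach IA (fun i => W r i * y i)]
      congr 1
      funext s
      rw [hyf s]
    have h0 := congrFun hfker (⟨r, Finset.mem_compl.mpr hr⟩ : ↥(IBᶜ))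
    rw [this]
    exact h0
  -- quadratic forms
  set x : Fin m → ℝ := U *ᵥ y with hx
  have hUty : Uᵀ *ᵥ x = y := by
    rw [hx, Matrix.mulVec_mulVec, hUtU, Matrix.one_mulVec]
  have hqA : x ⬝ᵥ (A *ᵥ x) = ∑ i, lam i * (y i)^2 := by
    conv_lhs => rw [spectral_real hA]
    rw [← hstarU, hstarU, conj_dot, hUty]
    simp [dotProduct, Matrix.mulVec_diagonal]
    congr 1; funext i; ring
  have hVtx : Vᵀ *ᵥ x = z := by
    rw [hx, hz, Matrix.mulVec_mulVec, hW]
  have hqB : x ⬝ᵥ (B *ᵥ x) = ∑ i, nu i * (z i)^2 := by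
    conv_lhs => rw [spectral_real hB]
    rw [← hstarV, hstarV, conj_dot, hVtx]
    simp [dotProduct, Matrix.mulVec_diagonal]
    congr 1; funext i; ring
  have hnorm : ∑ i, (z i)^2 = ∑ i, (y i)^2 := by
    have h1 : y ⬝ᵥ ((Wᵀ * W) *ᵥ y) = z ⬝ᵥ z := by
      rw [← Matrix.mulVec_mulVec, Matrix.dotProduct_mulVec, Matrix.vecMul_transpose]
    rw [hWtW, Matrix.one_mulVec] at h1
    calc ∑ i, (z i)^2 = z ⬝ᵥ z := by simp [dotProduct, sq]
      _ = y ⬝ᵥ y := h1.symm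
      _ = ∑ i, (y i)^2 := by simp [dotProduct, sq]
  have hsumpos : 0 < ∑ i, (y i)^2 := by
    obtain ⟨i, hi⟩ := hyne
    apply Finset.sum_pos' (fun i _ => sq_nonneg _) ⟨i, Finset.mem_univ i, by positivity⟩
  -- bounds
  have hlow : α * ∑ i, (y i)^2 ≤ ∑ i, lam i * (y i)^2 := by
    rw [Finset.mul_sum]
    apply Finset.sum_le_sum
    intro i _
    by_cases hiIA : i ∈ IA
    · obtain ⟨s, hs, rfl⟩ := Finset.mem_image.mp hiIA
      have : α ≤ lam (σA s) :=
        Tuple.monotone_sort lam (Finset.mem_Ici.mp hs)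
      exact mul_le_mul_of_nonneg_right this (sq_nonneg _)
    · rw [hysupp i hiIA]
      simp
  have hhigh : ∑ i, nu i * (z i)^2 ≤ β * ∑ i, (z i)^2 := by
    rw [Finset.mul_sum]
    apply Finset.sum_le_sum
    intro i _
    by_cases hiIB : i ∈ IB
    · obtain ⟨s, hs, rfl⟩ := Finset.mem_image.mp hiIB
      have : nu (σB s) ≤ β :=
        Tuple.monotone_sort nu (Finset.mem_Iic.mp hs)
      exact mul_le_mul_of_nonneg_right this (sq_nonneg _)
    · rw [hzsupp i hiIB]
      simp
  -- PSD
  have hpsd : c * (x ⬝ᵥ (A *ᵥ x)) ≤ x ⬝ᵥ (B *ᵥ x) := by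
    have := (Matrix.posSemidef_iff_dotProduct_mulVec.mp h).2 x
    simp only [star_trivial, Matrix.sub_mulVec, Matrix.smul_mulVec,
      dotProduct_sub, dotProduct_smul] at this
    have h2 : (0:ℝ) ≤ x ⬝ᵥ (B *ᵥ x) - c * (x ⬝ᵥ (A *ᵥ x)) := by
      simpa [smul_eq_mul] using this
    linarith
  have : c * α * ∑ i, (y i)^2 ≤ β * ∑ i, (y i)^2 := by
    calc c * α * ∑ i, (y i)^2 = c * (α * ∑ i, (y i)^2) := by ring
      _ ≤ c * (x ⬝ᵥ (A *ᵥ x)) := by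
          rw [hqA]; exact mul_le_mul_of_nonneg_left hlow hc
      _ ≤ x ⬝ᵥ (B *ᵥ x) := hpsd
      _ = ∑ i, nu i * (z i)^2 := hqB
      _ ≤ β * ∑ i, (z i)^2 := hhigh
      _ = β * ∑ i, (y i)^2 := by rw [hnorm]
  exact le_of_mul_le_mul_right this hsumpos

lemma sum_Iic_eq_range {m : ℕ} (F : Fin m → ℝ) (k : Fin m) :
    ∑ j ∈ Finset.Iic k, F j
      = ∑ j ∈ Finset.range (k.val+1), (fun i => if h : i < m then F ⟨i,h⟩ else 0) j := by
  refine Finset.sum_bij' (fun (j : Fin m) _ => (j : ℕ))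
    (fun j hj => (⟨j, by have := Finset.mem_range.mp hj; omega⟩ : Fin m)) ?_ ?_ ?_ ?_ ?_
  · intro a ha
    simp only [Finset.mem_range]
    have := Finset.mem_Iic.mp ha
    omega
  · intro a ha
    simp only [Finset.mem_Iic]
    have := Finset.mem_range.mp ha
    exact Fin.mk_le_of_le_val (by omega)
  · intro a ha; rfl
  · intro a ha; rfl
  · intro a ha
    rw [dif_pos a.isLt]

lemma l2_of_majorization {m : ℕ} (v w : Fin m → ℝ)
    (hmaj : ∀ (k : Fin m) (S : Finset (Fin m)), S.card = k.val + 1 →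
      ∑ i ∈ S, v i ≤ ∑ j ∈ Finset.Iic k, w j)
    (htot : ∑ i, v i = ∑ i, w i) :
    ∑ i, (v i)^2 ≤ ∑ i, (w i)^2 := by
  classical
  -- sorted-decreasing version of v
  set τ := Tuple.sort v with hτ
  set e : Equiv.Perm (Fin m) := (Fin.revPerm).trans τ with he
  set u : Fin m → ℝ := fun i => v (e i) with hu
  have hu_anti : Antitone u := by
    intro i j hij
    exact Tuple.monotone_sort v (Fin.rev_le_rev.mpr hij)
  -- partial-sum domination for u
  have hP : ∀ k : Fin m, ∑ j ∈ Finset.Iic k, u j ≤ ∑ j ∈ Finset.Iic k, w j := by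
    intro k
    have hinj : Function.Injective (fun i : Fin m => e i) := e.injective
    have hcard : ((Finset.Iic k).image (fun i => e i)).card = k.val + 1 := by
      rw [Finset.card_image_of_injective _ hinj, Fin.card_Iic]
    have := hmaj k ((Finset.Iic k).image (fun i => e i)) hcard
    rwa [Finset.sum_image (fun a _ b _ hab => hinj hab)] at this
  have hsum_u : ∑ i, u i = ∑ i, v i := Equiv.sum_comp e v
  have hsq_u : ∑ i, (u i)^2 = ∑ i, (v i)^2 := Equiv.sum_comp e (fun i => (v i)^2)
  -- pass to ℕ-indexed
  set uu : ℕ → ℝ := fun i => if h : i < m then u ⟨i,h⟩ else 0 with huu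
  set ww : ℕ → ℝ := fun i => if h : i < m then w ⟨i,h⟩ else 0 with hww
  have huui : ∀ i : Fin m, uu i.val = u i := fun i => by
    rw [huu]; simp only; rw [dif_pos i.isLt]
  have hwwi : ∀ i : Fin m, ww i.val = w i := fun i => by
    rw [hww]; simp only; rw [dif_pos i.isLt]
  have hfin : ∀ (F : Fin m → ℝ) (FF : ℕ → ℝ), (∀ i : Fin m, FF i.val = F i) →
      ∑ i ∈ Finset.range m, FF i = ∑ i, F i := by
    intro F FF hFF
    rw [← Fin.sum_univ_eq_sum_range]
    exact Finset.sum_congr rfl (fun i _ => hFF i)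
  -- G function
  set G : ℕ → ℝ := fun i => ∑ j ∈ Finset.range i, (ww j - uu j) with hG
  have hGm : G m = 0 := by
    rw [hG]
    simp only [Finset.sum_sub_distrib]
    rw [hfin u uu huui, hfin w ww hwwi, hsum_u, htot, sub_self]
  have hGnonneg : ∀ i, i < m → 0 ≤ G (i+1) := by
    intro i hi
    set k : Fin m := ⟨i, hi⟩ with hk
    rw [hG]
    simp only [Finset.sum_sub_distrib]
    rw [← sum_Iic_eq_range u k, ← sum_Iic_eq_range w k]
    exact sub_nonneg.mpr (hP k)
  -- Abel
  have habel : 0 ≤ ∑ i ∈ Finset.range m, uu i * (ww i - uu i) := by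
    have := Finset.sum_range_by_parts uu (fun i => ww i - uu i) m
    simp only [smul_eq_mul] at this
    rw [this]
    have h1 : uu (m-1) * (∑ i ∈ Finset.range m, (ww i - uu i)) = 0 := by
      rw [show (∑ i ∈ Finset.range m, (ww i - uu i)) = G m from rfl, hGm, mul_zero]
    rw [h1, zero_sub]
    have hsn : ∑ x ∈ Finset.range (m-1), (uu (x + 1) - uu x) * ∑ i ∈ Finset.range (x + 1), (ww i - uu i) ≤ 0 := by
      apply Finset.sum_nonpos
      intro i hi
      have him : i + 1 < m := by have := Finset.mem_range.mp hi; omega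
      have hmono : uu (i+1) - uu i ≤ 0 := by
        rw [huu]
        simp only
        rw [dif_pos him, dif_pos (by omega : i < m)]
        exact sub_nonpos.mpr (hu_anti (by simp [Fin.le_def]))
      have hGpos : 0 ≤ ∑ j ∈ Finset.range (i+1), (ww j - uu j) := hGnonneg i (by omega)
      exact mul_nonpos_of_nonpos_of_nonneg hmono hGpos
    linarith
  -- ∑ u^2 ≤ ∑ u w
  have hkey : ∑ i ∈ Finset.range m, uu i ^ 2 ≤ ∑ i ∈ Finset.range m, uu i * ww i := by
    have : ∑ i ∈ Finset.range m, uu i * (ww i - uu i)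
        = ∑ i ∈ Finset.range m, uu i * ww i - ∑ i ∈ Finset.range m, uu i ^ 2 := by
      rw [← Finset.sum_sub_distrib]
      congr 1; funext i; ring
    linarith [habel, this ▸ habel]
  -- Cauchy-Schwarz
  have hcs := Finset.sum_mul_sq_le_sq_mul_sq (Finset.range m) uu ww
  set SU := ∑ i ∈ Finset.range m, uu i ^ 2 with hSU
  set SW := ∑ i ∈ Finset.range m, ww i ^ 2 with hSW
  set SP := ∑ i ∈ Finset.range m, uu i * ww i with hSP
  have hSUnn : 0 ≤ SU := Finset.sum_nonneg (fun i _ => sq_nonneg _)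
  have hfinal : SU ≤ SW := by
    rcases eq_or_lt_of_le hSUnn with h0 | h0
    · have hSWnn : 0 ≤ SW := Finset.sum_nonneg (fun i _ => sq_nonneg _)
      linarith
    · nlinarith [hkey, hcs]
  have e1 : SU = ∑ i, (v i)^2 := by
    rw [hSU, hfin (fun i => (u i)^2) (fun i => uu i ^2)
      (fun i => by show uu i.val ^ 2 = u i ^ 2; rw [huui]), hsq_u]
  have e2 : SW = ∑ i, (w i)^2 := by
    rw [hSW, hfin (fun i => (w i)^2) (fun i => ww i ^2)
      (fun i => by show ww i.val ^ 2 = w i ^ 2; rw [hwwi])]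
  rwa [e1, e2] at hfinal

section Assembly
variable {B : Matrix (Fin m) (Fin m) ℝ}

lemma ratio_posDef (hA : A.PosDef) (hB : B.PosDef) :
    (pdInvSqrt A * B * pdInvSqrt A).PosDef := by
  set S := pdInvSqrt A with hSdef
  have hSH : S.IsHermitian := pdInvSqrt_isHermitian hA
  have hSt : Sᵀ = S := by
    rw [← Matrix.conjTranspose_eq_transpose_of_trivial, hSH.eq]
  rw [Matrix.posDef_iff_dotProduct_mulVec]
  constructor
  · have := Matrix.isHermitian_mul_mul_conjTranspose S hB.1
    rw [Matrix.conjTranspose_eq_transpose_of_trivial, hSt] at this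
    exact this
  · intro x hx
    have hSx : Sᵀ *ᵥ x ≠ 0 := by
      rw [hSt]
      intro hc
      apply hx
      have : (pdSqrt A * S) *ᵥ x = pdSqrt A *ᵥ (S *ᵥ x) := (Matrix.mulVec_mulVec _ _ _).symm
      rw [pdSqrt_mul_pdInvSqrt hA, Matrix.one_mulVec] at this
      rw [this, hc, Matrix.mulVec_zero]
    have key : x ⬝ᵥ ((S * B * Sᵀ) *ᵥ x) = (Sᵀ *ᵥ x) ⬝ᵥ (B *ᵥ (Sᵀ *ᵥ x)) := conj_dot S B x
    have := (Matrix.posDef_iff_dotProduct_mulVec.mp hB).2 hSx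
    simp only [star_trivial] at this ⊢
    rw [show S * B * S = S * B * Sᵀ from by rw [hSt], key]
    exact this

lemma B_eq_RMR (hA : A.PosDef) (hB : B.PosDef) :
    pdSqrt A * (pdInvSqrt A * B * pdInvSqrt A) * pdSqrt A = B := by
  have h1 : pdSqrt A * (pdInvSqrt A * B * pdInvSqrt A) * pdSqrt A
      = (pdSqrt A * pdInvSqrt A) * B * (pdInvSqrt A * pdSqrt A) := by
    simp only [Matrix.mul_assoc]
  rw [h1, pdSqrt_mul_pdInvSqrt hA, pdInvSqrt_mul_pdSqrt hA, Matrix.one_mul, Matrix.mul_one]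

lemma conj_R_det (hA : A.PosDef) (X : Matrix (Fin m) (Fin m) ℝ) :
    (pdSqrt A * X * pdSqrt A).det = A.det * X.det := by
  rw [Matrix.det_mul, Matrix.det_mul]
  have h : (pdSqrt A).det * (pdSqrt A).det = A.det := by
    rw [← Matrix.det_mul, pdSqrt_mul_self hA]
  calc (pdSqrt A).det * X.det * (pdSqrt A).det
      = (pdSqrt A).det * (pdSqrt A).det * X.det := by ring
    _ = A.det * X.det := by rw [h]

lemma key_majorization (hA : A.PosDef) (hB : B.PosDef)
    (k : Fin m) (S : Finset (Fin m)) (hS : S.card = k.val + 1) :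
    ∑ i ∈ S, (Real.log (sortedEigs B i) - Real.log (sortedEigs A i))
      ≤ ∑ j ∈ Finset.Iic k, Real.log (sortedEigs (pdInvSqrt A * B * pdInvSqrt A) j) := by
  classical
  set R := pdSqrt A with hRdef
  set M := pdInvSqrt A * B * pdInvSqrt A with hMdef
  have hM : M.PosDef := ratio_posDef hA hB
  have hMH := hM.1
  have hRH : R.IsHermitian := pdSqrt_isHermitian hA
  have hRHeq : Rᴴ = R := hRH.eq
  have hRR : R * R = A := pdSqrt_mul_self hA
  have hRMR : R * M * R = B := B_eq_RMR hA hB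
  have hdetconj : ∀ X : Matrix (Fin m) (Fin m) ℝ, (R * X * R).det = A.det * X.det :=
    fun X => conj_R_det hA X
  clear_value R M
  clear hRdef hMdef
  set c := sortedEigs M k with hcdef
  have hcpos : 0 < c := sortedEigs_pos hM k
  set Mp := matFun (fun x => max x c) M with hMpdef
  have hMpH : Mp.IsHermitian := matFun_isHermitian hMH _
  have hMpPD : Mp.PosDef := matFun_posDef hMH (fun i => lt_max_of_lt_right hcpos)
  have h1 : (Mp - M).PosSemidef := by
    have := matFun_sub_posSemidef hMH (f := fun x => max x c) (g := id)
      (fun i => le_max_left _ _)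
    rwa [matFun_spectral hMH] at this
  have h3 : (Mp - c • 1).PosSemidef := by
    have := matFun_sub_posSemidef hMH (f := fun x => max x c) (g := fun _ => c)
      (fun i => le_max_right _ _)
    rwa [matFun_const hMH] at this
  have hdet7 : Mp.det = ∏ i, max (hMH.eigenvalues i) c := det_matFun hMH _
  clear_value Mp
  clear hMpdef
  set Bp := R * Mp * R with hBpdef
  have hBpH : Bp.IsHermitian := by
    have := Matrix.isHermitian_mul_mul_conjTranspose R hMpH
    rwa [hRHeq] at this
  have h2 : (Bp - B).PosSemidef := by
    have hconj := h1.mul_mul_conjTranspose_same R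
    have heq : R * (Mp - M) * Rᴴ = Bp - B := by
      rw [hRHeq, Matrix.mul_sub, Matrix.sub_mul, hBpdef]
      rw [hRMR]
    rwa [heq] at hconj
  have h4 : (Bp - c • A).PosSemidef := by
    have hconj := h3.mul_mul_conjTranspose_same R
    have heq : R * (Mp - c • 1) * Rᴴ = Bp - c • A := by
      rw [hRHeq, Matrix.mul_sub, Matrix.sub_mul]
      congr 1
      rw [Matrix.mul_smul, Matrix.smul_mul, Matrix.mul_one, hRR]
    rwa [heq] at hconj
  have hb_bp : ∀ i, sortedEigs B i ≤ sortedEigs Bp i := by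
    intro i
    have := weyl_mono hB.1 hBpH zero_le_one (by rwa [one_smul]) i
    simpa using this
  have hca_bp : ∀ i, c * sortedEigs A i ≤ sortedEigs Bp i :=
    fun i => weyl_mono hA.1 hBpH hcpos.le h4 i
  have hbp_pos : ∀ i, 0 < sortedEigs Bp i :=
    fun i => lt_of_lt_of_le (sortedEigs_pos hB i) (hb_bp i)
  -- step 1: each term on S
  have step1 : ∀ i ∈ S, Real.log (sortedEigs B i) - Real.log (sortedEigs A i)
      ≤ (Real.log (sortedEigs Bp i) - Real.log (sortedEigs A i) - Real.log c) + Real.log c := by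
    intro i _
    have := Real.log_le_log (sortedEigs_pos hB i) (hb_bp i)
    linarith
  have step2 : ∀ i, 0 ≤ Real.log (sortedEigs Bp i) - Real.log (sortedEigs A i) - Real.log c := by
    intro i
    have h5 := hca_bp i
    have h6 : Real.log (c * sortedEigs A i) ≤ Real.log (sortedEigs Bp i) :=
      Real.log_le_log (mul_pos hcpos (sortedEigs_pos hA i)) h5
    rw [Real.log_mul hcpos.ne' (sortedEigs_pos hA i).ne'] at h6
    linarith
  -- determinant identities
  have hdetA : Real.log A.det = ∑ i, Real.log (sortedEigs A i) := by
    rw [det_eq_prod_sortedEigs hA.1]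
    exact Real.log_prod (fun i _ => (sortedEigs_pos hA i).ne')
  have hdetBp : Real.log Bp.det = ∑ i, Real.log (sortedEigs Bp i) := by
    rw [det_eq_prod_sortedEigs hBpH]
    exact Real.log_prod (fun i _ => (hbp_pos i).ne')
  have hdetBp2 : Bp.det = A.det * Mp.det := hdetconj Mp
  have hdetMp : Real.log Mp.det = ∑ i, Real.log (max (sortedEigs M i) c) := by
    have h7 := hdet7
    have h8 : ∏ i, max (sortedEigs M i) c = ∏ i, max (hMH.eigenvalues i) c :=
      prod_sortedEigs hMH (fun x => max x c)
    rw [h7, ← h8]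
    exact Real.log_prod (fun i _ => (lt_max_of_lt_right hcpos).ne')
  have hsplit : ∑ i, Real.log (max (sortedEigs M i) c)
      = (∑ j ∈ Finset.Iic k, Real.log (sortedEigs M j))
        + ((Finset.Iic k)ᶜ.card : ℝ) * Real.log c := by
    rw [← Finset.sum_add_sum_compl (Finset.Iic k)]
    congr 1
    · apply Finset.sum_congr rfl
      intro i hi
      rw [max_eq_left (sortedEigs_antitone hMH (Finset.mem_Iic.mp hi))]
    · have : ∀ i ∈ (Finset.Iic k)ᶜ, Real.log (max (sortedEigs M i) c) = Real.log c := by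
        intro i hi
        have hki : k ≤ i := le_of_lt (by
          have := Finset.mem_compl.mp hi
          rw [Finset.mem_Iic] at this
          exact lt_of_not_ge this)
        rw [max_eq_right (sortedEigs_antitone hMH hki)]
      rw [Finset.sum_congr rfl this, Finset.sum_const, nsmul_eq_mul]
  have hlogBp : Real.log Bp.det = Real.log A.det + Real.log Mp.det := by
    rw [hdetBp2]
    exact Real.log_mul hA.det_pos.ne' hMpPD.det_pos.ne'
  -- sum manipulations
  have main1 : ∑ i ∈ S, (Real.log (sortedEigs B i) - Real.log (sortedEigs A i))
      ≤ (∑ i, (Real.log (sortedEigs Bp i) - Real.log (sortedEigs A i) - Real.log c))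
        + (S.card : ℝ) * Real.log c := by
    calc ∑ i ∈ S, (Real.log (sortedEigs B i) - Real.log (sortedEigs A i))
        ≤ ∑ i ∈ S, ((Real.log (sortedEigs Bp i) - Real.log (sortedEigs A i) - Real.log c)
            + Real.log c) := Finset.sum_le_sum step1
      _ = (∑ i ∈ S, (Real.log (sortedEigs Bp i) - Real.log (sortedEigs A i) - Real.log c))
            + (S.card : ℝ) * Real.log c := by
          rw [Finset.sum_add_distrib, Finset.sum_const, nsmul_eq_mul]
      _ ≤ (∑ i, (Real.log (sortedEigs Bp i) - Real.log (sortedEigs A i) - Real.log c))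
            + (S.card : ℝ) * Real.log c := by
          refine add_le_add ?_ le_rfl
          exact Finset.sum_le_sum_of_subset_of_nonneg (Finset.subset_univ S)
            (fun i _ _ => step2 i)
  have main2 : ∑ i, (Real.log (sortedEigs Bp i) - Real.log (sortedEigs A i) - Real.log c)
      = Real.log Bp.det - Real.log A.det - ((Finset.univ : Finset (Fin m)).card : ℝ) * Real.log c := by
    rw [Finset.sum_sub_distrib, Finset.sum_sub_distrib, hdetA, hdetBp,
      Finset.sum_const, nsmul_eq_mul]
  have hcards : ((Finset.univ : Finset (Fin m)).card : ℝ)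
      = (S.card : ℝ) + ((Finset.Iic k)ᶜ.card : ℝ) := by
    have h9 : (Finset.Iic k).card + (Finset.Iic k)ᶜ.card = (Finset.univ : Finset (Fin m)).card := by
      rw [Finset.card_add_card_compl, Finset.card_univ]
    have h10 : (Finset.Iic k).card = S.card := by rw [Fin.card_Iic, hS]
    push_cast [← h9, h10]
    ring
  calc ∑ i ∈ S, (Real.log (sortedEigs B i) - Real.log (sortedEigs A i))
      ≤ (∑ i, (Real.log (sortedEigs Bp i) - Real.log (sortedEigs A i) - Real.log c))
        + (S.card : ℝ) * Real.log c := main1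
    _ = ∑ j ∈ Finset.Iic k, Real.log (sortedEigs M j) := by
        rw [main2, hlogBp, hdetMp, hsplit, hcards]
        ring
  
lemma total_log_eq (hA : A.PosDef) (hB : B.PosDef) :
    ∑ i, (Real.log (sortedEigs B i) - Real.log (sortedEigs A i))
      = ∑ i, Real.log (sortedEigs (pdInvSqrt A * B * pdInvSqrt A) i) := by
  classical
  set M := pdInvSqrt A * B * pdInvSqrt A with hMdef
  have hM : M.PosDef := ratio_posDef hA hB
  have hdetB2 : B.det = A.det * M.det := by
    rw [← B_eq_RMR hA hB (B := B), ← hMdef]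
    exact conj_R_det hA M
  have hdetA : Real.log A.det = ∑ i, Real.log (sortedEigs A i) := by
    rw [det_eq_prod_sortedEigs hA.1]
    exact Real.log_prod (fun i _ => (sortedEigs_pos hA i).ne')
  have hdetB : Real.log B.det = ∑ i, Real.log (sortedEigs B i) := by
    rw [det_eq_prod_sortedEigs hB.1]
    exact Real.log_prod (fun i _ => (sortedEigs_pos hB i).ne')
  have hdetM : Real.log M.det = ∑ i, Real.log (sortedEigs M i) := by
    rw [det_eq_prod_sortedEigs hM.1]
    exact Real.log_prod (fun i _ => (sortedEigs_pos hM i).ne')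
  have : Real.log B.det = Real.log A.det + Real.log M.det := by
    rw [hdetB2]
    exact Real.log_mul hA.det_pos.ne' hM.det_pos.ne'
  rw [Finset.sum_sub_distrib, ← hdetA, ← hdetB, ← hdetM]
  linarith

end Assembly
end Aux

/-- the eigenvalue map is contractive for the Riemannian trace distance:
`(∑ i (log λ_i(A) − log λ_i(B))²)^{1/2} ≤ ‖log (A^{-1/2} B A^{-1/2})‖_F`. -/
theorem eigenvalue_map_riemannian_contractive
    (n : ℕ) (A B : Matrix (Fin n) (Fin n) ℝ)
    (hA : A.PosDef) (hB : B.PosDef) :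
    Real.sqrt (∑ i : Fin n, (Real.log (sortedEigs A i) - Real.log (sortedEigs B i)) ^ 2)
      ≤ riemDist A B := by
  classical
  set M := pdInvSqrt A * B * pdInvSqrt A with hMdef
  have hM : M.PosDef := ratio_posDef hA hB
  set v : Fin n → ℝ := fun i => Real.log (sortedEigs B i) - Real.log (sortedEigs A i) with hv
  set w : Fin n → ℝ := fun i => Real.log (sortedEigs M i) with hw
  have hl2 : ∑ i, (v i)^2 ≤ ∑ i, (w i)^2 := by
    apply l2_of_majorization v w
    · intro k Sf hSf
      exact key_majorization hA hB k Sf hSf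
    · exact total_log_eq hA hB
  have hLHS : ∑ i : Fin n, (Real.log (sortedEigs A i) - Real.log (sortedEigs B i)) ^ 2
      = ∑ i, (v i)^2 := by
    apply Finset.sum_congr rfl
    intro i _
    rw [hv]
    ring
  have hRHS : riemDist A B = Real.sqrt (∑ i, (w i)^2) := by
    rw [riemDist, frob, matLog, ← hMdef]
    congr 1
    rw [matFun_mul hM.1, trace_matFun hM.1]
    have h8 : ∑ i, (fun x => Real.log x * Real.log x) (sortedEigs M i)
        = ∑ i, (fun x => Real.log x * Real.log x) (hM.1.eigenvalues i) :=
      sum_sortedEigs hM.1 (fun x => Real.log x * Real.log x)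
    rw [← h8]
    apply Finset.sum_congr rfl
    intro i _
    rw [hw]
    ring
  rw [hLHS, hRHS]
  exact Real.sqrt_le_sqrt hl2
end
end

section
/- Let A ∈ P_{2n} admit a Williamson decomposition A = Mᵀ [[D,0],[0,D]] M, where M is a real symplectic matrix (MᵀJM = J with J = [[0,I_n],[−I_n,0]]) and D = diag(d_1, …, d_n) with 0 < d_1 ≤ ⋯ ≤ d_n. Then the eigenvalues of the positive definite matrix A^{1/2} Jᵀ A J A^{1/2}, arranged in decreasing order, are (d_n², d_n², d_{n−1}², d_{n−1}², …, d_1², d_1²); equivalently, the extended symplectic eigenvalues of A satisfy δ̃(A) = λ^{1/2}(A^{1/2} Jᵀ A J A^{1/2}). -/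
open Matrix BigOperators

noncomputable section

section AuxLemmas

open Polynomial

/-- Conjugation by an invertible matrix preserves the characteristic polynomial. -/
private lemma charpoly_conj_aux {m : ℕ} (P Y Q : Matrix (Fin m) (Fin m) ℝ)
    (h : P * Q = 1) : (P * Y * Q).charpoly = Y.charpoly := by
  have hmap : P.map (C : ℝ →+* ℝ[X]) * Q.map (C : ℝ →+* ℝ[X]) = 1 := by
    rw [← Matrix.map_mul, h, Matrix.map_one _ (map_zero _) (map_one _)]
  have hcm : Matrix.charmatrix (P * Y * Q)
      = P.map (C : ℝ →+* ℝ[X]) * Matrix.charmatrix Y * Q.map (C : ℝ →+* ℝ[X]) := by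
    unfold Matrix.charmatrix
    rw [mul_sub, sub_mul]
    congr 1
    · rw [mul_assoc,
        (Matrix.scalar_commute (X : ℝ[X]) (fun r => Commute.all _ r)
          (Q.map (C : ℝ →+* ℝ[X]))).eq, ← mul_assoc, hmap, one_mul]
    · simp only [RingHom.mapMatrix_apply, Matrix.map_mul]
  show (Matrix.charmatrix (P * Y * Q)).det = (Matrix.charmatrix Y).det
  rw [hcm, Matrix.det_mul, Matrix.det_mul, mul_right_comm, ← Matrix.det_mul, hmap,
    Matrix.det_one, one_mul]

/-- Mapping `univ` through an equivalence does not change the multiset of values. -/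
private lemma univ_val_map_equiv {α β γ : Type*} [Fintype α] [Fintype β]
    (e : α ≃ β) (g : β → γ) :
    (Finset.univ.val.map (fun a => g (e a))) = (Finset.univ : Finset β).val.map g := by
  have h := Finset.map_univ_equiv e
  rw [← h, Finset.map_val, Multiset.map_map]
  rfl

/-- Two monotone tuples with the same multiset of values are equal. -/
private lemma mono_eq_of_multiset_eq {m : ℕ} {f g : Fin m → ℝ} (hf : Monotone f)
    (hg : Monotone g)
    (h : Finset.univ.val.map f = Finset.univ.val.map g) : f = g := by
  apply List.ofFn_injective
  rw [Fin.univ_val_map f, Fin.univ_val_map g] at h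
  exact List.Perm.eq_of_sortedLE
    (List.sortedLE_ofFn_iff.mpr hf) (List.sortedLE_ofFn_iff.mpr hg) (Multiset.coe_eq_coe.mp h)

/-- The roots of `∏ (X - f i)`. -/
private lemma roots_prod_aux {m : ℕ} (f : Fin m → ℝ) :
    (∏ j, (Polynomial.X - Polynomial.C (f j))).roots = Finset.univ.val.map f := by
  rw [Finset.prod_eq_multiset_prod,
    show Multiset.map (fun j => Polynomial.X - Polynomial.C (f j)) Finset.univ.val
        = Multiset.map (fun a => Polynomial.X - Polynomial.C a)
            (Multiset.map f Finset.univ.val) by rw [Multiset.map_map]; rfl]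
  exact Polynomial.roots_multiset_prod_X_sub_C _

end AuxLemmas

set_option maxHeartbeats 1000000 in
/-- if `A = Mᵀ [[D,0],[0,D]] M` is a Williamson decomposition
(`M` symplectic, `D = diag d` with `0 < d_1 ≤ … ≤ d_n`), then the decreasingly ordered
eigenvalues of `A^{1/2} Jᵀ A J A^{1/2}` are `(d_n², d_n², …, d_1², d_1²)`; equivalently the
extended symplectic eigenvalues of `A` are `λ^{1/2}(A^{1/2} Jᵀ A J A^{1/2})`. -/
theorem williamson_extended_symplectic_eigenvalues
    (n : ℕ) (A M : Matrix (Fin (n + n)) (Fin (n + n)) ℝ)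
    (d : Fin n → ℝ) (hd : ∀ i, 0 < d i) (hdmono : Monotone d)
    (hM : Mᵀ * Jmat n * M = Jmat n)
    (hdecomp : A = Mᵀ *
      (Matrix.reindex finSumFinEquiv finSumFinEquiv
        (Matrix.fromBlocks (Matrix.diagonal d) 0 0 (Matrix.diagonal d))) * M)
    (hA : A.PosDef) :
    ∀ i : Fin (n + n),
      sortedEigs (sympProd A) i = d ⟨n - 1 - i.val / 2, by have := i.isLt; omega⟩ ^ 2 ∧
      Real.sqrt (sortedEigs (sympProd A) i) =
        d ⟨n - 1 - i.val / 2, by have := i.isLt; omega⟩ := by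
  classical
  set Nmat : Matrix (Fin (n + n)) (Fin (n + n)) ℝ :=
    Matrix.reindex finSumFinEquiv finSumFinEquiv
      (Matrix.fromBlocks (Matrix.diagonal d) 0 0 (Matrix.diagonal d)) with hNmdef
  -- basic reindex lemmas
  have rmul : ∀ X Y : Matrix (Fin n ⊕ Fin n) (Fin n ⊕ Fin n) ℝ,
      (Matrix.reindex finSumFinEquiv finSumFinEquiv X) *
        (Matrix.reindex finSumFinEquiv finSumFinEquiv Y)
        = Matrix.reindex finSumFinEquiv finSumFinEquiv (X * Y) := by
    intro X Y
    simp [Matrix.reindex_apply, Matrix.submatrix_mul_equiv]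
  have r1 : Matrix.reindex finSumFinEquiv finSumFinEquiv
      (1 : Matrix (Fin n ⊕ Fin n) (Fin n ⊕ Fin n) ℝ) = 1 := by
    simp [Matrix.reindex_apply, Matrix.submatrix_one_equiv]
  have hJdef : Jmat n = Matrix.reindex finSumFinEquiv finSumFinEquiv
      (Matrix.fromBlocks 0 1 (-1) 0) := rfl
  have hJt : (Jmat n)ᵀ = Matrix.reindex finSumFinEquiv finSumFinEquiv
      (Matrix.fromBlocks 0 (-1) 1 0) := by
    rw [hJdef, Matrix.transpose_reindex]
    congr 1
    rw [Matrix.fromBlocks_transpose]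
    simp
  -- block identities
  have hJJt : Jmat n * (Jmat n)ᵀ = 1 := by
    rw [hJt, hJdef, rmul, ← r1]
    congr 1
    rw [Matrix.fromBlocks_multiply]
    simp [← Matrix.fromBlocks_one]
  have hJtJ : (Jmat n)ᵀ * Jmat n = 1 := by
    rw [hJt, hJdef, rmul, ← r1]
    congr 1
    rw [Matrix.fromBlocks_multiply]
    simp [← Matrix.fromBlocks_one]
  have hNJ : Nmat * Jmat n = Jmat n * Nmat := by
    rw [hNmdef, hJdef, rmul, rmul]
    congr 1
    rw [Matrix.fromBlocks_multiply, Matrix.fromBlocks_multiply]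
    simp
  have hNN : Nmat * Nmat = Matrix.diagonal
      (fun j => Sum.elim (fun i : Fin n => d i * d i) (fun i : Fin n => d i * d i)
        (finSumFinEquiv.symm j)) := by
    rw [hNmdef, rmul]
    rw [show Matrix.fromBlocks (Matrix.diagonal d) 0 0 (Matrix.diagonal d) *
          Matrix.fromBlocks (Matrix.diagonal d) 0 0 (Matrix.diagonal d)
        = Matrix.diagonal (Sum.elim (fun i : Fin n => d i * d i)
            (fun i : Fin n => d i * d i)) by
      rw [Matrix.fromBlocks_multiply]
      simp [Matrix.diagonal_mul_diagonal, ← Matrix.fromBlocks_diagonal]]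
    rw [Matrix.reindex_apply, Matrix.submatrix_diagonal_equiv]
    rfl
  -- symplectic facts about M
  have hMi : ((Jmat n)ᵀ * Mᵀ * Jmat n) * M = 1 := by
    simp only [Matrix.mul_assoc]
    rw [show Mᵀ * (Jmat n * M) = Jmat n from by rw [← Matrix.mul_assoc]; exact hM, hJtJ]
  have hML : M * ((Jmat n)ᵀ * Mᵀ * Jmat n) = 1 := mul_eq_one_comm.mp hMi
  have h6 : M * ((Jmat n)ᵀ * Mᵀ) = (Jmat n)ᵀ := by
    have h7 := congrArg (fun X => X * (Jmat n)ᵀ) hML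
    simp only [Matrix.mul_assoc, one_mul] at h7
    rw [hJJt, mul_one] at h7
    simpa [Matrix.mul_assoc] using h7
  have hMJMr : M * Jmat n * Mᵀ = Jmat n := by
    have h8 := congrArg Matrix.transpose h6
    simp only [Matrix.transpose_mul, Matrix.transpose_transpose] at h8
    simpa [Matrix.mul_assoc] using h8
  -- pointed versions of the identities
  have hMJM' : ∀ X, M * (Jmat n * (Mᵀ * X)) = Jmat n * X := by
    intro X
    conv_rhs => rw [← hMJMr]
    simp only [Matrix.mul_assoc]
  have hMr : ∀ X, Mᵀ * (Jmat n * (M * X)) = Jmat n * X := by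
    intro X
    conv_rhs => rw [← hM]
    simp only [Matrix.mul_assoc]
  have hJtJ' : ∀ X : Matrix (Fin (n + n)) (Fin (n + n)) ℝ,
      (Jmat n)ᵀ * (Jmat n * X) = X := by
    intro X
    rw [← Matrix.mul_assoc, hJtJ, one_mul]
  have hNJ' : ∀ X, Nmat * (Jmat n * X) = Jmat n * (Nmat * X) := by
    intro X
    simp only [← Matrix.mul_assoc]
    rw [hNJ]
  -- facts about the square root of A
  have hSsd : pdSqrt A = cfc Real.sqrt A := by
    unfold pdSqrt matFun
    rw [dif_pos hA.isHermitian]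
    exact (hA.isHermitian.cfc_eq Real.sqrt).symm
  have hSS : pdSqrt A * pdSqrt A = A := by
    rw [hSsd, ← cfc_mul Real.sqrt Real.sqrt A]
    conv_rhs => rw [← cfc_id' ℝ A (ha := hA.isHermitian)]
    apply cfc_congr
    intro x hx
    obtain ⟨i, rfl⟩ := hA.isHermitian.spectrum_real_eq_range_eigenvalues ▸ hx
    exact Real.mul_self_sqrt (hA.eigenvalues_pos i).le
  have hSH : (pdSqrt A).IsHermitian := by rw [hSsd]; exact cfc_predicate Real.sqrt A
  have hdet : IsUnit A.det := isUnit_iff_ne_zero.mpr (ne_of_gt hA.det_pos)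
  have hAinv : A * A⁻¹ = 1 := Matrix.mul_nonsing_inv A hdet
  have hAS : A * pdSqrt A = pdSqrt A * A := by
    have h := mul_assoc (pdSqrt A) (pdSqrt A) (pdSqrt A)
    rw [hSS] at h
    exact h
  have hASAinv : A * (pdSqrt A * A⁻¹) = pdSqrt A := by
    rw [← Matrix.mul_assoc, hAS, Matrix.mul_assoc, hAinv, mul_one]
  -- the key similarity
  have hkey : sympProd A = (pdSqrt A * ((Jmat n)ᵀ * Mᵀ * Jmat n)) * (Nmat * Nmat) *
      (M * (pdSqrt A * A⁻¹)) := by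
    have h2 : ∀ X, (Jmat n)ᵀ * (Mᵀ * (Jmat n * (Nmat * (Nmat * (M * X)))))
        = (Jmat n)ᵀ * (A * (Jmat n * (A * X))) := by
      intro X
      rw [hdecomp]
      simp only [Matrix.mul_assoc]
      rw [hMJM', hNJ']
    show pdSqrt A * (Jmat n)ᵀ * A * Jmat n * pdSqrt A = _
    simp only [Matrix.mul_assoc]
    rw [h2, hASAinv]
  have hPQ1 : (pdSqrt A * ((Jmat n)ᵀ * Mᵀ * Jmat n)) * (M * (pdSqrt A * A⁻¹)) = 1 := by
    simp only [Matrix.mul_assoc]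
    rw [hMr, hJtJ', ← Matrix.mul_assoc, hSS, hAinv]
  have hcp1 : (sympProd A).charpoly = (Nmat * Nmat).charpoly := by
    rw [hkey]
    exact charpoly_conj_aux _ _ _ hPQ1
  -- sympProd A is Hermitian
  have hSHt : (pdSqrt A)ᵀ = pdSqrt A := by
    rw [← Matrix.conjTranspose_eq_transpose_of_trivial]; exact hSH
  have hAt : Aᵀ = A := by
    rw [← Matrix.conjTranspose_eq_transpose_of_trivial]; exact hA.isHermitian
  have hH : (sympProd A).IsHermitian := by
    show (sympProd A)ᴴ = sympProd A
    rw [Matrix.conjTranspose_eq_transpose_of_trivial]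
    show (pdSqrt A * (Jmat n)ᵀ * A * Jmat n * pdSqrt A)ᵀ
      = pdSqrt A * (Jmat n)ᵀ * A * Jmat n * pdSqrt A
    simp [Matrix.transpose_mul, Matrix.transpose_transpose, hSHt, hAt, Matrix.mul_assoc]
  -- charpoly of sympProd A via the spectral theorem
  have hU : (hH.eigenvectorUnitary : Matrix (Fin (n + n)) (Fin (n + n)) ℝ) *
      star (hH.eigenvectorUnitary : Matrix (Fin (n + n)) (Fin (n + n)) ℝ) = 1 :=
    Matrix.mem_unitaryGroup_iff.mp (hH.eigenvectorUnitary).2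
  have hsp : sympProd A = (hH.eigenvectorUnitary : Matrix (Fin (n + n)) (Fin (n + n)) ℝ) *
      Matrix.diagonal hH.eigenvalues *
      star (hH.eigenvectorUnitary : Matrix (Fin (n + n)) (Fin (n + n)) ℝ) := by
    conv_lhs => rw [hH.spectral_theorem]
    simp [RCLike.ofReal_real_eq_id]
  have hcp2 : (sympProd A).charpoly
      = ∏ j, (Polynomial.X - Polynomial.C (hH.eigenvalues j)) := by
    calc (sympProd A).charpoly
        = ((hH.eigenvectorUnitary : Matrix (Fin (n + n)) (Fin (n + n)) ℝ) *
            Matrix.diagonal hH.eigenvalues *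
            star (hH.eigenvectorUnitary : Matrix (Fin (n + n)) (Fin (n + n)) ℝ)).charpoly :=
          congrArg Matrix.charpoly hsp
      _ = (Matrix.diagonal hH.eigenvalues).charpoly := charpoly_conj_aux _ _ _ hU
      _ = ∏ j, (Polynomial.X - Polynomial.C (hH.eigenvalues j)) := by
          rw [Matrix.charpoly_of_upperTriangular _ (Matrix.blockTriangular_diagonal _)]
          simp
  have hcp3 : (Nmat * Nmat).charpoly = ∏ j, (Polynomial.X - Polynomial.C
      (Sum.elim (fun i : Fin n => d i * d i) (fun i : Fin n => d i * d i)
        (finSumFinEquiv.symm j))) := by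
    rw [hNN, Matrix.charpoly_of_upperTriangular _ (Matrix.blockTriangular_diagonal _)]
    simp
  -- multiset of eigenvalues
  have hpe : (∏ j, (Polynomial.X - Polynomial.C (hH.eigenvalues j)))
      = ∏ j, (Polynomial.X - Polynomial.C
        (Sum.elim (fun i : Fin n => d i * d i) (fun i : Fin n => d i * d i)
          (finSumFinEquiv.symm j))) := by
    rw [← hcp2, hcp1, hcp3]
  have hms : Finset.univ.val.map hH.eigenvalues
      = Finset.univ.val.map (fun j : Fin (n + n) =>
          Sum.elim (fun i : Fin n => d i * d i) (fun i : Fin n => d i * d i)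
            (finSumFinEquiv.symm j)) := by
    rw [← roots_prod_aux, ← roots_prod_aux, hpe]
  -- the parity equivalence
  have hn2 : ∀ j : Fin (n + n), j.val / 2 < n := fun j => by have := j.isLt; omega
  let ψ : Fin (n + n) ≃ (Fin n ⊕ Fin n) :=
    { toFun := fun j => if j.val % 2 = 0 then Sum.inl ⟨j.val / 2, hn2 j⟩
        else Sum.inr ⟨j.val / 2, hn2 j⟩
      invFun := Sum.elim (fun k => ⟨k.val + k.val, by have := k.isLt; omega⟩)
        (fun k => ⟨k.val + k.val + 1, by have := k.isLt; omega⟩)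
      left_inv := fun j => by
        by_cases h : j.val % 2 = 0 <;> simp only [h, if_true, if_false, reduceIte,
          Sum.elim_inl, Sum.elim_inr] <;> exact Fin.ext (by simp; omega)
      right_inv := fun s => by
        rcases s with k | k
        · simp only [Sum.elim_inl]
          simp only [show (k.val + k.val) % 2 = 0 by omega, reduceIte]
          congr 1
          exact Fin.ext (by simp; omega)
        · simp only [Sum.elim_inr]
          simp only [show ¬ ((k.val + k.val + 1) % 2 = 0) by omega, reduceIte]
          congr 1
          exact Fin.ext (by simp; omega) }
  have hψ : ∀ j : Fin (n + n),
      Sum.elim (fun i : Fin n => d i * d i) (fun i : Fin n => d i * d i) (ψ j)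
        = d ⟨j.val / 2, hn2 j⟩ * d ⟨j.val / 2, hn2 j⟩ := by
    intro j
    by_cases h : j.val % 2 = 0 <;> simp [ψ, h]
  -- the two monotone tuples agree
  have hmono1 : Monotone (fun j : Fin (n + n) =>
      hH.eigenvalues (Tuple.sort hH.eigenvalues j)) := Tuple.monotone_sort hH.eigenvalues
  have hmono2 : Monotone (fun j : Fin (n + n) =>
      d ⟨j.val / 2, hn2 j⟩ * d ⟨j.val / 2, hn2 j⟩) := by
    intro j k hjk
    have h1 : (⟨j.val / 2, hn2 j⟩ : Fin n) ≤ ⟨k.val / 2, hn2 k⟩ :=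
      Nat.div_le_div_right hjk
    have h2 := hdmono h1
    have h3 := (hd ⟨j.val / 2, hn2 j⟩).le
    exact mul_le_mul h2 h2 h3 (h3.trans h2)
  have heq : (fun j : Fin (n + n) => hH.eigenvalues (Tuple.sort hH.eigenvalues j))
      = (fun j : Fin (n + n) => d ⟨j.val / 2, hn2 j⟩ * d ⟨j.val / 2, hn2 j⟩) := by
    apply mono_eq_of_multiset_eq hmono1 hmono2
    calc Finset.univ.val.map (fun j : Fin (n + n) =>
            hH.eigenvalues (Tuple.sort hH.eigenvalues j))
        = Finset.univ.val.map hH.eigenvalues :=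
          univ_val_map_equiv (Tuple.sort hH.eigenvalues) hH.eigenvalues
      _ = Finset.univ.val.map (fun j : Fin (n + n) =>
            Sum.elim (fun i : Fin n => d i * d i) (fun i : Fin n => d i * d i)
              (finSumFinEquiv.symm j)) := hms
      _ = Finset.univ.val.map
            (Sum.elim (fun i : Fin n => d i * d i) (fun i : Fin n => d i * d i)) :=
          univ_val_map_equiv finSumFinEquiv.symm _
      _ = Finset.univ.val.map (fun j : Fin (n + n) =>
            Sum.elim (fun i : Fin n => d i * d i) (fun i : Fin n => d i * d i) (ψ j)) :=
          (univ_val_map_equiv ψ _).symm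
      _ = Finset.univ.val.map (fun j : Fin (n + n) =>
            d ⟨j.val / 2, hn2 j⟩ * d ⟨j.val / 2, hn2 j⟩) := by
          congr 1
          funext j
          exact hψ j
  -- conclude
  intro i
  have hse : sortedEigs (sympProd A) i
      = hH.eigenvalues (Tuple.sort hH.eigenvalues i.rev) := by
    unfold sortedEigs
    rw [dif_pos hH]
  have h5 : hH.eigenvalues (Tuple.sort hH.eigenvalues i.rev)
      = d ⟨i.rev.val / 2, hn2 i.rev⟩ * d ⟨i.rev.val / 2, hn2 i.rev⟩ :=
    congrFun heq i.rev
  have hidx : (⟨i.rev.val / 2, hn2 i.rev⟩ : Fin n)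
      = ⟨n - 1 - i.val / 2, by have := i.isLt; omega⟩ := by
    apply Fin.ext
    simp only [Fin.val_rev]
    have := i.isLt
    omega
  have hmain : sortedEigs (sympProd A) i
      = d ⟨n - 1 - i.val / 2, by have := i.isLt; omega⟩ ^ 2 := by
    rw [hse, h5, congrArg d hidx, ← pow_two]
  exact ⟨hmain, by rw [hmain, Real.sqrt_sq (hd _).le]⟩
end
end

section
/- (Integral Ky Fan majorization) Let (Ω, P) be a probability space and φ : Ω → S_n a Bochner-integrable map into the n×n real symmetric matrices. Then λ(∫_Ω φ dP) ≺ ∫_Ω λ(φ(ω)) dP(ω): for every k = 1, …, n, ∑_{i=1}^k λ_i(∫_Ω φ dP) ≤ ∫_Ω ∑_{i=1}^k λ_i(φ(ω)) dP(ω), with equality for k = n. -/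
open Matrix BigOperators

noncomputable section

open MeasureTheory

attribute [local instance] Matrix.normedAddCommGroup Matrix.normedSpace

namespace KyFanAux

variable {n : ℕ}

lemma quad_nonneg {Q : Matrix (Fin n) (Fin n) ℝ} (hQ : Q.PosSemidef) (x : Fin n → ℝ) :
    0 ≤ ∑ i, x i * ∑ j, Q i j * x j := by
  simpa [dotProduct, Matrix.mulVec] using hQ.dotProduct_mulVec_nonneg x

lemma diag_nonneg {Q : Matrix (Fin n) (Fin n) ℝ} (hQ : Q.PosSemidef) (p : Fin n) :
    0 ≤ Q p p := by
  have h := quad_nonneg hQ (Pi.single p 1)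
  simpa [Pi.single_apply, mul_ite, ite_mul, Finset.sum_ite_eq', Finset.sum_ite_eq] using h

lemma entry_bound {Q : Matrix (Fin n) (Fin n) ℝ} (hQ : Q.PosSemidef)
    (h1Q : ((1 : Matrix (Fin n) (Fin n) ℝ) - Q).PosSemidef) (p q : Fin n) : |Q p q| ≤ 1 := by
  have hqp : Q q p = Q p q := by
    have := congrFun (congrFun hQ.1 p) q
    simpa [Matrix.conjTranspose_apply] using this
  have hpp : Q p p ≤ 1 := by
    have := diag_nonneg h1Q p
    simp [Matrix.sub_apply, Matrix.one_apply] at this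
    linarith
  have hqq : Q q q ≤ 1 := by
    have := diag_nonneg h1Q q
    simp [Matrix.sub_apply, Matrix.one_apply] at this
    linarith
  by_cases hpq : p = q
  · subst hpq
    rw [abs_of_nonneg (diag_nonneg hQ p)]
    exact hpp
  · have h₁ := quad_nonneg hQ (Pi.single p 1 + Pi.single q 1)
    have h₂ := quad_nonneg hQ (Pi.single p 1 - Pi.single q 1)
    simp only [Pi.add_apply, Pi.sub_apply, Pi.single_apply, mul_add, mul_sub, add_mul, sub_mul,
      mul_ite, ite_mul, mul_one, one_mul, mul_zero, zero_mul, Finset.sum_add_distrib,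
      Finset.sum_sub_distrib, Finset.sum_ite_eq', Finset.mem_univ, if_true] at h₁ h₂
    rw [abs_le]
    constructor <;> linarith

lemma trace_bound {Q Z : Matrix (Fin n) (Fin n) ℝ} (hQ : ∀ p q, |Q p q| ≤ 1) :
    |(Q * Z).trace| ≤ (n : ℝ) ^ 2 * ‖Z‖ := by
  have h0 : 0 ≤ ‖Z‖ := norm_nonneg _
  calc |(Q * Z).trace| = |∑ p, ∑ q, Q p q * Z q p| := by
        simp [Matrix.trace, Matrix.diag, Matrix.mul_apply]
    _ ≤ ∑ p, |∑ q, Q p q * Z q p| := Finset.abs_sum_le_sum_abs _ _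
    _ ≤ ∑ p, ∑ q, |Q p q * Z q p| :=
        Finset.sum_le_sum fun p _ => Finset.abs_sum_le_sum_abs _ _
    _ ≤ ∑ _p : Fin n, ∑ _q : Fin n, ‖Z‖ := by
        refine Finset.sum_le_sum fun p _ => Finset.sum_le_sum fun q _ => ?_
        rw [abs_mul]
        have h1 : |Z q p| ≤ ‖Z‖ := by
          simpa [Real.norm_eq_abs] using Matrix.norm_entry_le_entrywise_sup_norm Z (i := q) (j := p)
        have h2 := hQ p q
        have h3 : (0:ℝ) ≤ |Q p q| := abs_nonneg _
        nlinarith [abs_nonneg (Z q p)]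
    _ = (n : ℝ) ^ 2 * ‖Z‖ := by simp [Finset.sum_const]; ring

lemma herm_decomp {X : Matrix (Fin n) (Fin n) ℝ} (hX : X.IsHermitian) :
    X = (hX.eigenvectorUnitary : Matrix (Fin n) (Fin n) ℝ) * Matrix.diagonal hX.eigenvalues *
      star (hX.eigenvectorUnitary : Matrix (Fin n) (Fin n) ℝ) := by
  have h : (RCLike.ofReal ∘ hX.eigenvalues : Fin n → ℝ) = hX.eigenvalues := by
    funext i; simp
  conv_lhs => rw [hX.spectral_theorem]
  rw [h]
  rfl

lemma trace_conj {U B : Matrix (Fin n) (Fin n) ℝ} (hsUU : star U * U = 1) :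
    (U * B * star U).trace = B.trace := by
  rw [Matrix.trace_mul_cycle, hsUU, Matrix.one_mul]

lemma conj_mul {U A B : Matrix (Fin n) (Fin n) ℝ} (hsUU : star U * U = 1) :
    (U * A * star U) * (U * B * star U) = U * (A * B) * star U := by
  calc (U * A * star U) * (U * B * star U) = U * A * (star U * U) * (B * star U) := by
        noncomm_ring
    _ = U * (A * B) * star U := by rw [hsUU]; noncomm_ring

lemma sortedEigs_eq {X : Matrix (Fin n) (Fin n) ℝ} (hX : X.IsHermitian) (i : Fin n) :
    sortedEigs X i = hX.eigenvalues (Tuple.sort hX.eigenvalues i.rev) := by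
  unfold sortedEigs; rw [dif_pos hX]

lemma sortedEigs_anti {X : Matrix (Fin n) (Fin n) ℝ} (hX : X.IsHermitian)
    {i j : Fin n} (hij : i ≤ j) : sortedEigs X j ≤ sortedEigs X i := by
  rw [sortedEigs_eq hX, sortedEigs_eq hX]
  exact Tuple.monotone_sort hX.eigenvalues (Fin.rev_le_rev.mpr hij)

lemma indicator_sum {k : ℕ} (hk : k ≤ n) :
    ∑ i : Fin n, (if (i : ℕ) < k then (1:ℝ) else 0) = (k : ℝ) := by
  rw [Fin.sum_univ_eq_sum_range (fun j => if j < k then (1:ℝ) else 0) n]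
  rw [← Finset.sum_filter]
  have h : Finset.filter (fun j => j < k) (Finset.range n) = Finset.range k := by
    ext j
    simp only [Finset.mem_filter, Finset.mem_range]
    omega
  rw [h]
  simp

lemma vec_lemma {k : ℕ} (hk : k ≤ n) (μ dd : Fin n → ℝ)
    (hmono : ∀ i j : Fin n, i ≤ j → μ j ≤ μ i)
    (h0 : ∀ i, 0 ≤ dd i) (h1 : ∀ i, dd i ≤ 1) (hsum : ∑ i, dd i = (k : ℝ)) :
    ∑ i, dd i * μ i ≤ ∑ i ∈ Finset.univ.filter (fun i : Fin n => i.val < k), μ i := by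
  rcases Nat.eq_zero_or_pos k with hk0 | hkpos
  · subst hk0
    have hz : ∀ i ∈ (Finset.univ : Finset (Fin n)), dd i = 0 :=
      (Finset.sum_eq_zero_iff_of_nonneg (fun i _ => h0 i)).mp (by simpa using hsum)
    have hL : ∑ i, dd i * μ i = 0 :=
      Finset.sum_eq_zero fun i hi => by rw [hz i hi, zero_mul]
    have hR : ∑ i ∈ Finset.univ.filter (fun i : Fin n => i.val < 0), μ i = 0 := by
      simp
    rw [hL, hR]
  · have hn : 0 < n := lt_of_lt_of_le hkpos hk
    set t : ℝ := μ ⟨k - 1, by omega⟩ with ht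
    set c : Fin n → ℝ := fun i => if (i : ℕ) < k then 1 else 0 with hc
    have hcsum : ∑ i, c i = (k : ℝ) := indicator_sum hk
    have hterm : ∀ i : Fin n, (dd i - c i) * (μ i - t) ≤ 0 := by
      intro i
      by_cases hik : (i : ℕ) < k
      · have h1' : dd i - c i ≤ 0 := by
          simp only [hc, if_pos hik]
          linarith [h1 i]
        have h2' : 0 ≤ μ i - t := by
          have hle : i ≤ (⟨k - 1, by omega⟩ : Fin n) := by
            simp only [Fin.le_def]
            omega
          have := hmono i ⟨k - 1, by omega⟩ hle
          simp only [ht] at *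
          linarith
        exact mul_nonpos_of_nonpos_of_nonneg h1' h2'
      · have h1' : 0 ≤ dd i - c i := by
          simp only [hc, if_neg hik]
          linarith [h0 i]
        have h2' : μ i - t ≤ 0 := by
          have hle : (⟨k - 1, by omega⟩ : Fin n) ≤ i := by
            simp only [Fin.le_def]
            omega
          have := hmono ⟨k - 1, by omega⟩ i hle
          simp only [ht] at *
          linarith
        exact mul_nonpos_of_nonneg_of_nonpos h1' h2'
    have hsum0 : ∑ i, (dd i - c i) * (μ i - t) ≤ 0 :=
      Finset.sum_nonpos fun i _ => hterm i
    have hexpand : ∑ i, (dd i - c i) * (μ i - t)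
        = (∑ i, dd i * μ i) - (∑ i, c i * μ i) - ((∑ i, dd i) - (∑ i, c i)) * t := by
      have hi : ∀ i : Fin n, (dd i - c i) * (μ i - t)
          = dd i * μ i - c i * μ i - (dd i * t - c i * t) := fun i => by ring
      simp only [hi]
      rw [Finset.sum_sub_distrib, Finset.sum_sub_distrib, Finset.sum_sub_distrib,
        ← Finset.sum_mul, ← Finset.sum_mul]
      ring
    have hfil : ∑ i ∈ Finset.univ.filter (fun i : Fin n => i.val < k), μ i = ∑ i, c i * μ i := by
      rw [Finset.sum_filter]
      apply Finset.sum_congr rfl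
      intro i _
      by_cases h : (i : ℕ) < k <;> simp [hc, h]
    rw [hfil]
    rw [hexpand, hsum, hcsum] at hsum0
    linarith

lemma kyfan_le {k : ℕ} (hk : k ≤ n) {X Q : Matrix (Fin n) (Fin n) ℝ} (hX : X.IsHermitian)
    (hQ : Q.PosSemidef) (h1Q : ((1 : Matrix (Fin n) (Fin n) ℝ) - Q).PosSemidef)
    (htr : Q.trace = (k : ℝ)) :
    (Q * X).trace ≤ ∑ i ∈ Finset.univ.filter (fun i : Fin n => i.val < k), sortedEigs X i := by
  classical
  set U : Matrix (Fin n) (Fin n) ℝ := (hX.eigenvectorUnitary : Matrix (Fin n) (Fin n) ℝ) with hU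
  have hsUU : star U * U = 1 := Matrix.UnitaryGroup.star_mul_self _
  have hUsU : U * star U = 1 := mul_eq_one_comm.mp hsUU
  set lam := hX.eigenvalues with hlam
  set M : Matrix (Fin n) (Fin n) ℝ := star U * Q * U with hM
  have hMps : M.PosSemidef := by
    rw [hM]
    have h := hQ.conjTranspose_mul_mul_same U
    rwa [← Matrix.star_eq_conjTranspose] at h
  have h1M : ((1 : Matrix (Fin n) (Fin n) ℝ) - M).PosSemidef := by
    have h := h1Q.conjTranspose_mul_mul_same U
    rw [← Matrix.star_eq_conjTranspose] at h
    have heq : star U * (1 - Q) * U = 1 - M := by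
      rw [Matrix.mul_sub, Matrix.sub_mul, Matrix.mul_one, hsUU, hM]
    rwa [heq] at h
  have htrM : ∑ j, M j j = (k : ℝ) := by
    have : (star U * Q * U).trace = Q.trace := by
      rw [Matrix.trace_mul_cycle, hUsU, Matrix.one_mul]
    calc ∑ j, M j j = M.trace := rfl
      _ = Q.trace := by rw [hM]; exact this
      _ = (k : ℝ) := htr
  have htrace : (Q * X).trace = ∑ j, M j j * lam j := by
    conv_lhs => rw [herm_decomp hX]
    have h1 : Q * ((hX.eigenvectorUnitary : Matrix (Fin n) (Fin n) ℝ) * Matrix.diagonal hX.eigenvalues *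
        star (hX.eigenvectorUnitary : Matrix (Fin n) (Fin n) ℝ)) = (Q * U) * Matrix.diagonal lam * star U := by
      rw [← hU, ← hlam]; noncomm_ring
    rw [h1, Matrix.trace_mul_cycle]
    have h2 : star U * (Q * U) * Matrix.diagonal lam = M * Matrix.diagonal lam := by
      rw [hM]; noncomm_ring
    rw [h2]
    simp [Matrix.trace, Matrix.diag, Matrix.mul_diagonal]
  set e : Equiv.Perm (Fin n) := Fin.revPerm.trans (Tuple.sort lam) with he
  have hsort : ∀ i : Fin n, sortedEigs X i = lam (e i) := by
    intro i
    rw [sortedEigs_eq hX]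
    simp [he, Equiv.trans_apply]
    rfl
  have hreidx : ∑ j, M j j * lam j = ∑ i, M (e i) (e i) * lam (e i) :=
    (Equiv.sum_comp e (fun j => M j j * lam j)).symm
  rw [htrace, hreidx]
  have := vec_lemma hk (fun i => sortedEigs X i) (fun i => M (e i) (e i))
    (fun i j hij => sortedEigs_anti hX hij)
    (fun i => diag_nonneg hMps (e i))
    (fun i => by
      have := diag_nonneg h1M (e i)
      simp [Matrix.sub_apply, Matrix.one_apply] at this
      linarith)
    (by rw [Equiv.sum_comp e (fun j => M j j)]; exact htrM)
  calc ∑ i, M (e i) (e i) * lam (e i) = ∑ i, M (e i) (e i) * sortedEigs X i := by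
        apply Finset.sum_congr rfl
        intro i _
        rw [hsort i]
    _ ≤ ∑ i ∈ Finset.univ.filter (fun i : Fin n => i.val < k), sortedEigs X i := this

lemma kyfan_eq {k : ℕ} (hk : k ≤ n) {X : Matrix (Fin n) (Fin n) ℝ} (hX : X.IsHermitian) :
    ∃ Q : Matrix (Fin n) (Fin n) ℝ, Q.PosSemidef ∧
      ((1 : Matrix (Fin n) (Fin n) ℝ) - Q).PosSemidef ∧ Q.trace = (k : ℝ) ∧
      (Q * X).trace = ∑ i ∈ Finset.univ.filter (fun i : Fin n => i.val < k), sortedEigs X i := by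
  classical
  set U : Matrix (Fin n) (Fin n) ℝ := (hX.eigenvectorUnitary : Matrix (Fin n) (Fin n) ℝ) with hU
  have hsUU : star U * U = 1 := Matrix.UnitaryGroup.star_mul_self _
  have hUsU : U * star U = 1 := mul_eq_one_comm.mp hsUU
  set lam := hX.eigenvalues with hlam
  set e : Equiv.Perm (Fin n) := Fin.revPerm.trans (Tuple.sort lam) with he
  set c : Fin n → ℝ := fun j => if ((e.symm j : Fin n) : ℕ) < k then 1 else 0 with hc
  have hc01 : ∀ j, 0 ≤ c j ∧ c j ≤ 1 := by
    intro j
    by_cases h : ((e.symm j : Fin n) : ℕ) < k <;> simp [hc, h]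
  refine ⟨U * Matrix.diagonal c * star U, ?_, ?_, ?_, ?_⟩
  · have hd : (Matrix.diagonal c).PosSemidef :=
      Matrix.posSemidef_diagonal_iff.mpr fun j => (hc01 j).1
    have := hd.mul_mul_conjTranspose_same U
    rwa [← Matrix.star_eq_conjTranspose] at this
  · have heq : (1 : Matrix (Fin n) (Fin n) ℝ) - U * Matrix.diagonal c * star U
        = U * Matrix.diagonal (fun j => 1 - c j) * star U := by
      have hds : Matrix.diagonal (fun j => 1 - c j)
          = (1 : Matrix (Fin n) (Fin n) ℝ) - Matrix.diagonal c := by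
        rw [← Matrix.diagonal_one, ← Matrix.diagonal_sub]
      rw [hds, Matrix.mul_sub, Matrix.sub_mul, Matrix.mul_one, hUsU]
    rw [heq]
    have hd : (Matrix.diagonal (fun j => 1 - c j)).PosSemidef :=
      Matrix.posSemidef_diagonal_iff.mpr fun j => by linarith [(hc01 j).2]
    have := hd.mul_mul_conjTranspose_same U
    rwa [← Matrix.star_eq_conjTranspose] at this
  · rw [trace_conj hsUU, Matrix.trace_diagonal]
    have := Equiv.sum_comp e c
    rw [← this]
    have hce : ∀ i : Fin n, c (e i) = if (i : ℕ) < k then (1:ℝ) else 0 := by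
      intro i
      simp [hc, Equiv.symm_apply_apply]
    calc ∑ i, c (e i) = ∑ i : Fin n, (if (i : ℕ) < k then (1:ℝ) else 0) := by
          exact Finset.sum_congr rfl fun i _ => hce i
      _ = (k : ℝ) := indicator_sum hk
  · have hXd : X = U * Matrix.diagonal lam * star U := herm_decomp hX
    conv_lhs => rw [hXd]
    rw [conj_mul hsUU, trace_conj hsUU, Matrix.diagonal_mul_diagonal, Matrix.trace_diagonal]
    have hsort : ∀ i : Fin n, sortedEigs X i = lam (e i) := by
      intro i
      rw [sortedEigs_eq hX]
      simp [he, Equiv.trans_apply]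
      rfl
    rw [← Equiv.sum_comp e (fun j => c j * lam j)]
    rw [Finset.sum_filter]
    apply Finset.sum_congr rfl
    intro i _
    have hce : c (e i) = if (i : ℕ) < k then (1:ℝ) else 0 := by
      simp [hc, Equiv.symm_apply_apply]
    rw [hce, hsort i]
    by_cases h : (i : ℕ) < k <;> simp [h]

lemma sum_sortedEigs {X : Matrix (Fin n) (Fin n) ℝ} (hX : X.IsHermitian) :
    ∑ i, sortedEigs X i = X.trace := by
  classical
  set lam := hX.eigenvalues with hlam
  set e : Equiv.Perm (Fin n) := Fin.revPerm.trans (Tuple.sort lam) with he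
  have hsUU : star (hX.eigenvectorUnitary : Matrix (Fin n) (Fin n) ℝ) *
      (hX.eigenvectorUnitary : Matrix (Fin n) (Fin n) ℝ) = 1 :=
    Matrix.UnitaryGroup.star_mul_self _
  have hsort : ∀ i : Fin n, sortedEigs X i = lam (e i) := by
    intro i
    rw [sortedEigs_eq hX]
    simp [he, Equiv.trans_apply]
    rfl
  calc ∑ i, sortedEigs X i = ∑ i, lam (e i) := Finset.sum_congr rfl fun i _ => hsort i
    _ = ∑ j, lam j := Equiv.sum_comp e lam
    _ = X.trace := by
        conv_rhs => rw [herm_decomp hX]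
        rw [trace_conj hsUU, Matrix.trace_diagonal]

/-- The Ky Fan partial-sum function. -/
def gk (k : ℕ) (X : Matrix (Fin n) (Fin n) ℝ) : ℝ :=
  ∑ i ∈ Finset.univ.filter (fun i : Fin n => i.val < k), sortedEigs X i

lemma gk_abs_le {k : ℕ} (hk : k ≤ n) {X : Matrix (Fin n) (Fin n) ℝ} (hX : X.IsHermitian) :
    |gk k X| ≤ (n : ℝ) ^ 2 * ‖X‖ := by
  obtain ⟨Q, hQ, h1Q, htr, heq⟩ := kyfan_eq hk hX
  rw [gk, ← heq]
  exact trace_bound (entry_bound hQ h1Q)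

lemma gk_lip_one {k : ℕ} (hk : k ≤ n) {A B : Matrix (Fin n) (Fin n) ℝ}
    (hA : A.IsHermitian) (hB : B.IsHermitian) :
    gk k A - gk k B ≤ (n : ℝ) ^ 2 * ‖A - B‖ := by
  obtain ⟨Q, hQ, h1Q, htr, heq⟩ := kyfan_eq hk hA
  have h2 : (Q * B).trace ≤ gk k B := kyfan_le hk hB hQ h1Q htr
  have h3 : (Q * A).trace - (Q * B).trace = (Q * (A - B)).trace := by
    rw [Matrix.mul_sub, Matrix.trace_sub]
  have h4 : |(Q * (A - B)).trace| ≤ (n : ℝ) ^ 2 * ‖A - B‖ := trace_bound (entry_bound hQ h1Q)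
  have h5 := (abs_le.mp h4).2
  have h6 : gk k A = (Q * A).trace := heq.symm
  rw [gk] at h6 ⊢
  linarith

lemma gk_contOn {k : ℕ} (hk : k ≤ n) :
    ContinuousOn (gk k) {X : Matrix (Fin n) (Fin n) ℝ | X.IsHermitian} := by
  have hlip : LipschitzOnWith ((n : NNReal) ^ 2) (gk k)
      {X : Matrix (Fin n) (Fin n) ℝ | X.IsHermitian} := by
    apply LipschitzOnWith.of_dist_le_mul
    intro X hX Y hY
    rw [Real.dist_eq, dist_eq_norm]
    have h1 := gk_lip_one hk hX hY
    have h2 := gk_lip_one hk hY hX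
    rw [norm_sub_rev Y X] at h2
    have hcast : ((((n : NNReal) ^ 2 : NNReal)) : ℝ) = (n : ℝ) ^ 2 := by push_cast; ring
    rw [hcast, abs_le]
    constructor <;> linarith
  exact hlip.continuousOn

/-- Symmetrization map. -/
def symmPart (Z : Matrix (Fin n) (Fin n) ℝ) : Matrix (Fin n) (Fin n) ℝ :=
  (2⁻¹ : ℝ) • (Z + Zᵀ)

lemma symmPart_herm (Z : Matrix (Fin n) (Fin n) ℝ) : (symmPart Z).IsHermitian := by
  rw [Matrix.IsHermitian, Matrix.conjTranspose_eq_transpose_of_trivial]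
  simp [symmPart, Matrix.transpose_smul, Matrix.transpose_add, add_comm]

lemma symmPart_of_herm {Z : Matrix (Fin n) (Fin n) ℝ} (hZ : Z.IsHermitian) : symmPart Z = Z := by
  have hz : Zᵀ = Z := by
    rw [← Matrix.conjTranspose_eq_transpose_of_trivial]
    exact hZ
  rw [symmPart, hz, ← two_smul ℝ Z, smul_smul]
  norm_num

lemma continuous_symmPart : Continuous (symmPart (n := n)) := by
  unfold symmPart; fun_prop
  -- continuous_const.smul (continuous_id.add continuous_id.matrix_transpose)

lemma gk_integrable {k : ℕ} (hk : k ≤ n) {Ω : Type*} [MeasurableSpace Ω] {P : Measure Ω}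
    {φ : Ω → Matrix (Fin n) (Fin n) ℝ} (hsym : ∀ ω, (φ ω).IsHermitian)
    (hint : @Integrable _ _ SeminormedAddGroup.toContinuousENorm _ _ φ P) : Integrable (fun ω => gk k (φ ω)) P := by
  have hcont : Continuous (fun Z : Matrix (Fin n) (Fin n) ℝ => gk k (symmPart Z)) :=
    (gk_contOn hk).comp_continuous continuous_symmPart fun Z => symmPart_herm Z
  have haesm : AEStronglyMeasurable (fun ω => gk k (φ ω)) P := by
    have h := hcont.comp_aestronglyMeasurable hint.1
    have heqf : (fun ω => gk k (symmPart (φ ω))) = fun ω => gk k (φ ω) := by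
      funext ω
      rw [symmPart_of_herm (hsym ω)]
    rwa [heqf] at h
  refine (hint.norm.const_mul ((n : ℝ) ^ 2)).mono' haesm ?_
  filter_upwards with ω
  simpa [Real.norm_eq_abs] using gk_abs_le hk (hsym ω)

end KyFanAux

/-- integral Ky Fan majorization: for a Bochner-integrable map
`φ : Ω → S_n` on a probability space, `λ(∫ φ dP) ≺ ∫ λ(φ(ω)) dP(ω)`:
all partial sums of the decreasingly ordered eigenvalues satisfy
`∑_{i<k} λ_i(∫ φ dP) ≤ ∫ ∑_{i<k} λ_i(φ(ω)) dP(ω)`, with equality for `k = n`. -/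
theorem integral_ky_fan_majorization
    (n : ℕ) {Ω : Type*} [MeasurableSpace Ω] (P : Measure Ω) [IsProbabilityMeasure P]
    (φ : Ω → Matrix (Fin n) (Fin n) ℝ)
    (hsym : ∀ ω, (φ ω).IsHermitian)
    (hint : @Integrable _ _ SeminormedAddGroup.toContinuousENorm _ _ φ P) :
    (∀ k : ℕ, k ≤ n →
      ∑ i ∈ Finset.univ.filter (fun i : Fin n => i.val < k), sortedEigs (∫ ω, φ ω ∂P) i
        ≤ ∫ ω, (∑ i ∈ Finset.univ.filter (fun i : Fin n => i.val < k),
            sortedEigs (φ ω) i) ∂P) ∧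
    (∑ i : Fin n, sortedEigs (∫ ω, φ ω ∂P) i = ∫ ω, (∑ i : Fin n, sortedEigs (φ ω) i) ∂P) := by
  classical
  set M : Matrix (Fin n) (Fin n) ℝ := ∫ ω, φ ω ∂P with hMdef
  -- continuous linear maps
  let trL : Matrix (Fin n) (Fin n) ℝ →L[ℝ] ℝ :=
    LinearMap.toContinuousLinearMap (Matrix.traceLinearMap (Fin n) ℝ ℝ)
  let trT : Matrix (Fin n) (Fin n) ℝ →L[ℝ] Matrix (Fin n) (Fin n) ℝ :=
    LinearMap.toContinuousLinearMap ((Matrix.transposeLinearEquiv (Fin n) (Fin n) ℝ ℝ).toLinearMap)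
  have hM : M.IsHermitian := by
    rw [Matrix.IsHermitian, Matrix.conjTranspose_eq_transpose_of_trivial]
    have h1 : ∫ ω, trT (φ ω) ∂P = trT M := trT.integral_comp_comm hint
    have h2 : ∫ ω, trT (φ ω) ∂P = ∫ ω, φ ω ∂P := by
      apply integral_congr_ae
      filter_upwards with ω
      show (φ ω)ᵀ = φ ω
      rw [← Matrix.conjTranspose_eq_transpose_of_trivial]
      exact hsym ω
    show Mᵀ = M
    calc Mᵀ = trT M := rfl
      _ = ∫ ω, trT (φ ω) ∂P := h1.symm
      _ = ∫ ω, φ ω ∂P := h2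
      _ = M := rfl
  constructor
  · intro k hk
    obtain ⟨Q, hQ, h1Q, htr, heq⟩ := KyFanAux.kyfan_eq hk hM
    let mulL : Matrix (Fin n) (Fin n) ℝ →L[ℝ] ℝ :=
      LinearMap.toContinuousLinearMap
        ((Matrix.traceLinearMap (Fin n) ℝ ℝ).comp (LinearMap.mulLeft ℝ Q))
    have hL : mulL M = ∫ ω, mulL (φ ω) ∂P := (mulL.integral_comp_comm hint).symm
    have hint1 : Integrable (fun ω => mulL (φ ω)) P := mulL.integrable_comp hint
    have hint2 : Integrable (fun ω => KyFanAux.gk k (φ ω)) P :=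
      KyFanAux.gk_integrable hk hsym hint
    calc ∑ i ∈ Finset.univ.filter (fun i : Fin n => i.val < k), sortedEigs M i
        = (Q * M).trace := heq.symm
      _ = mulL M := rfl
      _ = ∫ ω, mulL (φ ω) ∂P := hL
      _ ≤ ∫ ω, KyFanAux.gk k (φ ω) ∂P := by
          apply integral_mono hint1 hint2
          intro ω
          exact KyFanAux.kyfan_le hk (hsym ω) hQ h1Q htr
      _ = ∫ ω, (∑ i ∈ Finset.univ.filter (fun i : Fin n => i.val < k),
            sortedEigs (φ ω) i) ∂P := rfl
  · have htrsum : Integrable (fun ω => trL (φ ω)) P := trL.integrable_comp hint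
    calc ∑ i : Fin n, sortedEigs M i = M.trace := KyFanAux.sum_sortedEigs hM
      _ = trL M := rfl
      _ = ∫ ω, trL (φ ω) ∂P := (trL.integral_comp_comm hint).symm
      _ = ∫ ω, (∑ i : Fin n, sortedEigs (φ ω) i) ∂P := by
          apply integral_congr_ae
          filter_upwards with ω
          exact (KyFanAux.sum_sortedEigs (hsym ω)).symm
end
end
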